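/- arXiv:2209.09277 — 2 statements merged into one kernel-verified Lean document; each statement's English description precedes it below -/
import Mathlib

section
/- Every noncrossing involution w in S_n has steady-state time at most 1; that is, BB^1(w) is in steady state. -/
open scoped Classical

/-- A box-ball system configuration with `n` balls: each of `1,...,n` appears exactly once,
and every entry is either a ball (a value in `1..n`) or an empty box `e = n+1`. -/
def IsBBSConfig (n : ℕ) (X : ℤ → ℕ) : Prop :=
  (∀ k : ℕ, 1 ≤ k → k ≤ n → ∃! j : ℤ, X j = k) ∧
  ∀ j : ℤ, X j = n + 1 ∨ (1 ≤ X j ∧ X j ≤ n)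

/-- The position of ball `k` in the configuration `X`. -/
noncomputable def pos (X : ℤ → ℕ) (k : ℕ) : ℤ :=
  Classical.epsilon fun j => X j = k

/-- The nearest empty box strictly to the right of position `p`. -/
noncomputable def jumpTarget (n : ℕ) (X : ℤ → ℕ) (p : ℤ) : ℤ :=
  Classical.epsilon fun q => p < q ∧ X q = n + 1 ∧ ∀ r : ℤ, p < r → X r = n + 1 → q ≤ r

/-- Ball `k` jumps to the nearest empty box to its right. -/
noncomputable def moveBall (n k : ℕ) (X : ℤ → ℕ) : ℤ → ℕ := fun j =>
  if j = jumpTarget n X (pos X k) then k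
  else if j = pos X k then n + 1
  else X j

/-- One box-ball move: the balls `1,...,n` jump, in increasing order of label. -/
noncomputable def BBMove (n : ℕ) (X : ℤ → ℕ) : ℤ → ℕ :=
  (List.range n).foldl (fun Y k => moveBall n (k + 1) Y) X

/-- The result of applying `t` box-ball moves to `X`. -/
noncomputable def BB (n t : ℕ) (X : ℤ → ℕ) : ℤ → ℕ := (BBMove n)^[t] X

/-- The configuration of a permutation `w`: the one-line notation of `w` (with values `1..n`)
is placed in boxes `1,...,n`, and all other boxes are empty. -/
def configOfPerm (n : ℕ) (w : Equiv.Perm (Fin n)) : ℤ → ℕ := fun j =>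
  if h : 1 ≤ j ∧ j ≤ (n : ℤ) then ((w ⟨j.toNat - 1, by omega⟩ : Fin n) : ℕ) + 1
  else n + 1

/-- `[a,b]` is a maximal contiguous increasing nonempty run of balls in `X`. -/
def IsRun (n : ℕ) (X : ℤ → ℕ) (a b : ℤ) : Prop :=
  a ≤ b ∧ (∀ j : ℤ, a ≤ j → j ≤ b → 1 ≤ X j ∧ X j ≤ n) ∧
  (∀ j : ℤ, a ≤ j → j < b → X j < X (j + 1)) ∧
  X a < X (a - 1) ∧ (X (b + 1) = n + 1 ∨ X (b + 1) < X b)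

/-- The run `[a,b]` of `X` is a soliton: it is preserved (as a run, with the same ball values
in the same order) by all subsequent box-ball moves. -/
def IsSoliton (n : ℕ) (X : ℤ → ℕ) (a b : ℤ) : Prop :=
  IsRun n X a b ∧ ∀ t : ℕ, ∃ a' : ℤ,
    IsRun n (BB n t X) a' (a' + (b - a)) ∧
    ∀ i : ℤ, 0 ≤ i → i ≤ b - a → BB n t X (a' + i) = X (a + i)

/-- A configuration is in steady state when every ball is contained in a soliton. -/
def SteadyState (n : ℕ) (X : ℤ → ℕ) : Prop :=
  ∀ j : ℤ, 1 ≤ X j → X j ≤ n → ∃ a b : ℤ, a ≤ j ∧ j ≤ b ∧ IsSoliton n X a b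

/-- The steady-state time of a permutation: the minimal number of box-ball moves needed
for its configuration to reach steady state. -/
noncomputable def SST (n : ℕ) (w : Equiv.Perm (Fin n)) : ℕ :=
  sInf {t : ℕ | SteadyState n (BB n t (configOfPerm n w))}

/-- The list of positions of the balls of `X`, from left to right. -/
noncomputable def ballPosList (n : ℕ) (X : ℤ → ℕ) : List ℤ :=
  ((Finset.Icc 1 n).image (pos X)).sort (· ≤ ·)

/-- Split a (left-to-right) list of ball positions into maximal blocks of contiguous positions
carrying increasing values: the increasing runs, from leftmost to rightmost. -/
def splitRuns (X : ℤ → ℕ) : List ℤ → List (List ℤ)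
  | [] => []
  | [p] => [[p]]
  | p :: q :: ps =>
    match splitRuns X (q :: ps) with
    | [] => [[p]]
    | r :: rest =>
      if p + 1 = q ∧ X p < X q then (p :: r) :: rest else [p] :: r :: rest

/-- The increasing run decomposition of `X`: the list of its increasing runs (as lists of ball
values), the first row being the rightmost run, the second row the next run to the left, etc. -/
noncomputable def ID (n : ℕ) (X : ℤ → ℕ) : List (List ℕ) :=
  ((splitRuns X (ballPosList n X)).map fun r => r.map X).reverse

/-- The soliton decomposition of a permutation: the increasing run decomposition of its
configuration once it has reached steady state (first row = rightmost soliton). -/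
noncomputable def SD (n : ℕ) (w : Equiv.Perm (Fin n)) : List (List ℕ) :=
  ID n (BB n (SST n w) (configOfPerm n w))

/-- Schensted row insertion of `x` into a row: returns the new row and the bumped entry. -/
def rowInsert (x : ℕ) : List ℕ → List ℕ × Option ℕ
  | [] => ([x], none)
  | y :: ys =>
    if x < y then (x :: ys, some y)
    else
      let p := rowInsert x ys
      (y :: p.1, p.2)

/-- Robinson--Schensted insertion of `x` into a tableau (a list of rows). -/
def insertT : List (List ℕ) → ℕ → List (List ℕ)
  | [], x => [[x]]
  | r :: rest, x =>
    match rowInsert x r with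
    | (r', none) => r' :: rest
    | (r', some y) => r' :: insertT rest y

/-- The index of the first row where the second tableau is longer than the first:
the row where a new cell was added. -/
def growRow : List (List ℕ) → List (List ℕ) → ℕ
  | [], _ => 0
  | _ :: _, [] => 0
  | p :: ps, q :: qs => if p.length < q.length then 0 else growRow ps qs + 1

def addToRow : List (List ℕ) → ℕ → ℕ → List (List ℕ)
  | [], _, i => [[i]]
  | q :: qs, 0, i => (q ++ [i]) :: qs
  | q :: qs, r + 1, i => q :: addToRow qs r i

/-- The pair of Robinson--Schensted tableaux `(P, Q)` of a word. -/
def RSpair (l : List ℕ) : List (List ℕ) × List (List ℕ) :=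
  ((List.range l.length).zip l).foldl
    (fun PQ ix =>
      let P' := insertT PQ.1 ix.2
      (P', addToRow PQ.2 (growRow PQ.1 P') (ix.1 + 1)))
    ([], [])

/-- The Robinson--Schensted insertion tableau `P(w)` of a word. -/
def RSP (l : List ℕ) : List (List ℕ) := (RSpair l).1

/-- The Robinson--Schensted recording tableau `Q(w)` of a word. -/
def RSQ (l : List ℕ) : List (List ℕ) := (RSpair l).2

/-- The one-line notation of a permutation of `Fin n`, as a word with values in `1..n`. -/
def wordOf (n : ℕ) (w : Equiv.Perm (Fin n)) : List ℕ :=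
  List.ofFn fun i => (w i : ℕ) + 1

/-- `T` is a standard Young tableau of size `n` (as a list of rows): rows are nonempty and
weakly decreasing in length, rows and columns strictly increase, and the entries are
exactly `1,...,n`. -/
def IsStandardTableau (n : ℕ) (T : List (List ℕ)) : Prop :=
  (∀ r ∈ T, r ≠ []) ∧
  (∀ r ∈ T, r.Chain' (· < ·)) ∧
  T.Chain' (fun r r' => r'.length ≤ r.length ∧
    ∀ k : ℕ, k < r'.length → r.getD k 0 < r'.getD k 0) ∧
  List.Perm T.flatten (List.range' 1 n)

/-- The column reading word of a tableau: columns are read bottom to top, left to right. -/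
def columnWord (T : List (List ℕ)) : List ℕ :=
  (List.range (T.headD []).length).flatMap fun k => (T.filterMap fun r => r[k]?).reverse

/-- The concatenation of the columns of a tableau, each read top to bottom, left to right. -/
def colsTopDown (T : List (List ℕ)) : List ℕ :=
  (List.range (T.headD []).length).flatMap fun k => T.filterMap fun r => r[k]?

/-- `T` is the column superstandard tableau of its shape: the standard tableau obtained by
filling the columns top to bottom, from left to right, with `1,2,...,n` in order. -/
def IsColumnSuperstandard (n : ℕ) (T : List (List ℕ)) : Prop :=
  IsStandardTableau n T ∧ colsTopDown T = List.range' 1 n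

/-- The length of a longest increasing subsequence of a word. -/
def incrLen (l : List ℕ) : ℕ :=
  ((l.sublists.filter fun s => decide (s.IsChain (· < ·))).map List.length).foldr max 0

/-- The number of descents of a word. -/
def desNum (l : List ℕ) : ℕ :=
  ((l.zip l.tail).filter fun p => decide (p.2 < p.1)).length

/-- A noncrossing involution: no pair of its 2-cycles can be written as `(a c)`, `(b d)`
with `a < b < c < d`. -/
def Noncrossing {n : ℕ} (w : Equiv.Perm (Fin n)) : Prop :=
  ¬ ∃ a b c d : Fin n, a < b ∧ b < c ∧ c < d ∧ w a = c ∧ w b = d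

/-- A nested involution: every pair of its distinct 2-cycles is a nesting, i.e. can be
written as `(a d)`, `(b c)` with `a < b < c < d`. -/
def Nested {n : ℕ} (w : Equiv.Perm (Fin n)) : Prop :=
  ∀ a b c d : Fin n, a < c → b < d → w a = c → w b = d → a ≠ b →
    (a < b ∧ d < c) ∨ (b < a ∧ c < d)

/-- `X` and `Y` differ by a dual Knuth relation of the first kind: `X` has the ball values
`k+1, k, k+2` in this relative left-to-right order, and `Y` is obtained from `X` by swapping
the balls `k+1` and `k+2`. -/
def DK1 (n : ℕ) (X Y : ℤ → ℕ) : Prop :=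
  ∃ (k : ℕ) (p q r : ℤ), 1 ≤ k ∧ k + 2 ≤ n ∧ p < q ∧ q < r ∧
    X p = k + 1 ∧ X q = k ∧ X r = k + 2 ∧
    Y p = k + 2 ∧ Y r = k + 1 ∧ ∀ j : ℤ, j ≠ p → j ≠ r → Y j = X j

/-- `X` and `Y` differ by a dual Knuth relation of the second kind: `X` has the ball values
`k, k+2, k+1` in this relative left-to-right order, and `Y` is obtained from `X` by swapping
the balls `k` and `k+1`. -/
def DK2 (n : ℕ) (X Y : ℤ → ℕ) : Prop :=
  ∃ (k : ℕ) (p q r : ℤ), 1 ≤ k ∧ k + 2 ≤ n ∧ p < q ∧ q < r ∧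
    X p = k ∧ X q = k + 2 ∧ X r = k + 1 ∧
    Y p = k + 1 ∧ Y r = k ∧ ∀ j : ℤ, j ≠ p → j ≠ r → Y j = X j

/-- `X` and `Y` differ by a dual Knuth relation (of the first or second kind). -/
def DualKnuth (n : ℕ) (X Y : ℤ → ℕ) : Prop :=
  DK1 n X Y ∨ DK1 n Y X ∨ DK2 n X Y ∨ DK2 n Y X


/-! ### Auxiliary machinery: placements and simulation of one box-ball move -/

/-- The configuration determined by a placement `f` of balls `1,…,n` at integer positions. -/
noncomputable def placedC (n : ℕ) (f : ℕ → ℤ) (j : ℤ) : ℕ :=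
  if h : ∃ v, 1 ≤ v ∧ v ≤ n ∧ f v = j then h.choose else n + 1

/-- Injectivity of a placement on the balls `1,…,n`. -/
def InjOnIcc (n : ℕ) (f : ℕ → ℤ) : Prop :=
  ∀ v v', 1 ≤ v → v ≤ n → 1 ≤ v' → v' ≤ n → f v = f v' → v = v'

lemma placedC_empty {n : ℕ} {f : ℕ → ℤ} {j : ℤ}
    (h : ∀ v, 1 ≤ v → v ≤ n → f v ≠ j) : placedC n f j = n + 1 := by
  unfold placedC
  rw [dif_neg]
  rintro ⟨v, h1, h2, h3⟩
  exact h v h1 h2 h3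

lemma placedC_eq {n : ℕ} {f : ℕ → ℤ} (hinj : InjOnIcc n f) {v : ℕ} {j : ℤ}
    (h1 : 1 ≤ v) (h2 : v ≤ n) (h3 : f v = j) : placedC n f j = v := by
  unfold placedC
  rw [dif_pos ⟨v, h1, h2, h3⟩]
  have hs := (⟨v, h1, h2, h3⟩ : ∃ v, 1 ≤ v ∧ v ≤ n ∧ f v = j).choose_spec
  exact hinj _ _ hs.1 hs.2.1 h1 h2 (hs.2.2.trans h3.symm)

lemma placedC_cases {n : ℕ} (f : ℕ → ℤ) (j : ℤ) :
    placedC n f j = n + 1 ∨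
    (1 ≤ placedC n f j ∧ placedC n f j ≤ n ∧ f (placedC n f j) = j) := by
  unfold placedC
  split_ifs with h
  · exact Or.inr h.choose_spec
  · exact Or.inl rfl

lemma placedC_congr {n : ℕ} {f g : ℕ → ℤ} (hinj : InjOnIcc n f)
    (hfg : ∀ v, 1 ≤ v → v ≤ n → f v = g v) : placedC n f = placedC n g := by
  have hinj' : InjOnIcc n g := by
    intro v v' a1 a2 a3 a4 h
    exact hinj v v' a1 a2 a3 a4 (by rw [hfg v a1 a2, hfg v' a3 a4, h])
  funext j
  rcases placedC_cases (n := n) f j with h | ⟨h1, h2, h3⟩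
  · rw [h]
    refine (placedC_empty ?_).symm
    intro v hv1 hv2 hgv
    have : placedC n f j = v := placedC_eq hinj hv1 hv2 (by rw [hfg v hv1 hv2, hgv])
    omega
  · rw [placedC_eq hinj' h1 h2 (by rw [← hfg _ h1 h2, h3])]

/-- The key simulation lemma: if `ρ` records the positions of the balls and `τ` a system of
targets satisfying the local box-ball conditions, then one box-ball move sends the
configuration placed by `ρ` to the configuration placed by `τ`. -/
lemma BBMove_placed (n : ℕ) (ρ τ : ℕ → ℤ)
    (hρ : InjOnIcc n ρ) (hτ : InjOnIcc n τ)
    (h1 : ∀ k, 1 ≤ k → k ≤ n → ρ k < τ k)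
    (h3 : ∀ k v, 1 ≤ k → k ≤ n → k ≤ v → v ≤ n → τ k ≠ ρ v)
    (h2 : ∀ k, 1 ≤ k → k ≤ n → ∀ j : ℤ, ρ k < j → j < τ k →
      ∃ v, 1 ≤ v ∧ v ≤ n ∧ ((k ≤ v ∧ ρ v = j) ∨ (v < k ∧ τ v = j))) :
    BBMove n (placedC n ρ) = placedC n τ := by
  classical
  set mix : ℕ → ℕ → ℤ := fun k v => if v ≤ k then τ v else ρ v with hmix
  have hmixinj : ∀ k, InjOnIcc n (mix k) := by
    intro k v v' a1 a2 a3 a4 h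
    simp only [hmix] at h
    split_ifs at h with hv hv' hv'
    · exact hτ v v' a1 a2 a3 a4 h
    · exact absurd h (h3 v v' a1 a2 (by omega) a4)
    · exact absurd h.symm (h3 v' v a3 a4 (by omega) a2)
    · exact hρ v v' a1 a2 a3 a4 h
  have key : ∀ k, k ≤ n →
      (List.range k).foldl (fun Y k => moveBall n (k + 1) Y) (placedC n ρ) =
        placedC n (mix k) := by
    intro k hk
    induction k with
    | zero =>
      simp only [List.range_zero, List.foldl_nil]
      refine placedC_congr hρ ?_
      intro v hv1 _; simp only [hmix]; rw [if_neg (by omega)]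
    | succ k ih =>
      rw [List.range_succ, List.foldl_append, ih (by omega)]
      simp only [List.foldl_cons, List.foldl_nil]
      -- one step: ball k+1 moves
      have hk1 : 1 ≤ k + 1 := by omega
      have hk2 : k + 1 ≤ n := hk
      have hmk : mix k (k + 1) = ρ (k + 1) := by simp only [hmix]; rw [if_neg (by omega)]
      -- position of ball k+1
      have hpos : pos (placedC n (mix k)) (k + 1) = ρ (k + 1) := by
        have hex : ∃ j, placedC n (mix k) j = k + 1 :=
          ⟨ρ (k + 1), by rw [← hmk]; exact placedC_eq (hmixinj k) hk1 hk2 rfl⟩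
        have hspec := Classical.epsilon_spec hex
        rcases placedC_cases (n := n) (mix k) (Classical.epsilon fun j => placedC n (mix k) j = k + 1)
          with h | ⟨_, _, h3'⟩
        · rw [hspec] at h; omega
        · rw [hspec] at h3'
          unfold pos
          rw [← h3', hmk]
      -- emptiness of the target
      have hempty : placedC n (mix k) (τ (k+1)) = n + 1 := by
        refine placedC_empty ?_
        intro v hv1 hv2 hne
        simp only [hmix] at hne
        split_ifs at hne with hv
        · exact (by omega : v ≠ k+1) (hτ v (k+1) hv1 hv2 hk1 hk2 hne)
        · exact h3 (k+1) v hk1 hk2 (by omega) hv2 hne.symm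
      have hjump : jumpTarget n (placedC n (mix k)) (ρ (k+1)) = τ (k+1) := by
        have hP : ρ (k+1) < τ (k+1) ∧ placedC n (mix k) (τ (k+1)) = n + 1 ∧
            ∀ r : ℤ, ρ (k+1) < r → placedC n (mix k) r = n + 1 → τ (k+1) ≤ r := by
          refine ⟨h1 _ hk1 hk2, hempty, ?_⟩
          intro r hr hrempty
          by_contra hlt
          push_neg at hlt
          obtain ⟨v, hv1, hv2, hv⟩ := h2 (k+1) hk1 hk2 r hr hlt
          rcases hv with ⟨hkv, hrv⟩ | ⟨hkv, hrv⟩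
          · have : placedC n (mix k) r = v := placedC_eq (hmixinj k) hv1 hv2
              (by simp only [hmix]; rw [if_neg (by omega)]; exact hrv)
            omega
          · have : placedC n (mix k) r = v := placedC_eq (hmixinj k) hv1 hv2
              (by simp only [hmix]; rw [if_pos (by omega)]; exact hrv)
            omega
        have hex : ∃ q : ℤ, ρ (k+1) < q ∧ placedC n (mix k) q = n+1 ∧
            ∀ r : ℤ, ρ (k+1) < r → placedC n (mix k) r = n+1 → q ≤ r := ⟨τ (k+1), hP⟩
        have hspec := Classical.epsilon_spec hex
        unfold jumpTarget
        have h1' := hspec.2.2 (τ (k+1)) hP.1 hP.2.1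
        have h2' := hP.2.2 _ hspec.1 hspec.2.1
        omega
      have hagree : ∀ v, v ≠ k+1 → mix (k+1) v = mix k v := by
        intro v hv
        simp only [hmix]
        by_cases h : v ≤ k
        · rw [if_pos h, if_pos (by omega)]
        · rw [if_neg h, if_neg (by omega)]
      funext j
      show moveBall n (k+1) (placedC n (mix k)) j = placedC n (mix (k+1)) j
      unfold moveBall
      rw [hpos, hjump]
      by_cases hj1 : j = τ (k+1)
      · rw [if_pos hj1, hj1]
        exact (placedC_eq (hmixinj (k+1)) hk1 hk2
          (by simp only [hmix]; rw [if_pos (le_refl _)])).symm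
      · rw [if_neg hj1]
        by_cases hj2 : j = ρ (k+1)
        · rw [if_pos hj2, hj2]
          refine (placedC_empty ?_).symm
          intro v hv1 hv2 hne
          simp only [hmix] at hne
          split_ifs at hne with hv
          · exact h3 v (k+1) hv1 hv2 hv hk2 hne
          · exact (by omega : v ≠ k + 1) (hρ v (k+1) hv1 hv2 hk1 hk2 hne)
        · rw [if_neg hj2]
          rcases placedC_cases (n := n) (mix k) j with h | ⟨hb1, hb2, hb3⟩
          · rw [h]
            refine (placedC_empty ?_).symm
            intro v hv1 hv2 hne
            by_cases hvk : v = k+1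
            · subst hvk
              simp only [hmix] at hne
              rw [if_pos (le_refl _)] at hne
              exact hj1 hne.symm
            · rw [hagree v hvk] at hne
              have : placedC n (mix k) j = v := placedC_eq (hmixinj k) hv1 hv2 hne
              omega
          · have hbk : placedC n (mix k) j ≠ k + 1 := by
              intro hc
              rw [hc, hmk] at hb3
              exact hj2 hb3.symm
            exact (placedC_eq (hmixinj (k+1)) hb1 hb2 (by rw [hagree _ hbk]; exact hb3)).symm
  have hfin := key n (le_refl n)
  show (List.range n).foldl (fun Y k => moveBall n (k + 1) Y) (placedC n ρ) = placedC n τ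
  rw [hfin]
  exact (placedC_congr hτ (fun v hv1 hv2 => by simp only [hmix]; rw [if_pos hv2])).symm

/-! ### Abstract noncrossing involutions on `{1,…,n}` -/

/-- An abstract noncrossing involution on `{1,…,n}` (with `σ 0 = 0`). -/
structure GoodInv (n : ℕ) (σ : ℕ → ℕ) : Prop where
  zero : σ 0 = 0
  mem : ∀ k, 1 ≤ k → k ≤ n → 1 ≤ σ k ∧ σ k ≤ n
  invol : ∀ k, 1 ≤ k → k ≤ n → σ (σ k) = k
  nc : ∀ a b, 1 ≤ a → a < b → b < σ a → σ a < σ b → σ b ≤ n → False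

namespace GoodInv

variable {n : ℕ} {σ : ℕ → ℕ}

lemma inj (h : GoodInv n σ) {a b : ℕ} (ha1 : 1 ≤ a) (ha2 : a ≤ n) (hb1 : 1 ≤ b) (hb2 : b ≤ n)
    (hab : σ a = σ b) : a = b := by
  have ha := h.invol a ha1 ha2
  have hb := h.invol b hb1 hb2
  rw [hab] at ha
  omega

/-- Any point strictly inside an arc `(a, σ a)` has partner strictly greater than `a`. -/
lemma inside (h : GoodInv n σ) {a j : ℕ} (ha1 : 1 ≤ a) (haj : a < j) (hjb : j < σ a) (hbn : σ a ≤ n) :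
    a < σ j := by
  have hj1 : 1 ≤ j := by omega
  have hj2 : j ≤ n := by omega
  have hjm := h.mem j hj1 hj2
  have hja := h.invol j hj1 hj2
  rcases lt_trichotomy (σ j) a with hlt | he | hgt
  · exact (h.nc (σ j) a hjm.1 hlt (by omega) (by omega) hbn).elim
  · rw [he] at hja
    omega
  · exact hgt

end GoodInv

/-- `k` is a "big-run" ball: not the top of an arc, and not preceded by the bottom of an arc. -/
def NBig (σ : ℕ → ℕ) (k : ℕ) : Prop := ¬ (σ k < k) ∧ ¬ (k - 1 < σ (k - 1))

/-- `k` is a "singleton" ball. -/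
def Sing (σ : ℕ → ℕ) (k : ℕ) : Prop := σ k < k ∨ k - 1 < σ (k - 1)

open scoped Classical in
/-- The rank of `k` among big-run balls. -/
noncomputable def Nrk (σ : ℕ → ℕ) (k : ℕ) : ℕ :=
  ((Finset.Icc 1 k).filter fun v => NBig σ v).card

section Nrk
variable {σ : ℕ → ℕ}

open scoped Classical

lemma Nrk_mono {k m : ℕ} (hkm : k ≤ m) : Nrk σ k ≤ Nrk σ m :=
  Finset.card_le_card (Finset.filter_subset_filter _ (Finset.Icc_subset_Icc_right hkm))

lemma Nrk_lt {k m : ℕ} (hm1 : 1 ≤ m) (hkm : k < m) (hbig : NBig σ m) :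
    Nrk σ k < Nrk σ m := by
  have hsub : insert m ((Finset.Icc 1 k).filter fun v => NBig σ v) ⊆
      (Finset.Icc 1 m).filter fun v => NBig σ v := by
    intro x hx
    rcases Finset.mem_insert.mp hx with rfl | hx
    · exact Finset.mem_filter.mpr ⟨Finset.mem_Icc.mpr ⟨hm1, le_refl _⟩, hbig⟩
    · have := Finset.mem_filter.mp hx
      exact Finset.mem_filter.mpr ⟨Finset.mem_Icc.mpr
        ⟨(Finset.mem_Icc.mp this.1).1, le_trans (Finset.mem_Icc.mp this.1).2 (by omega)⟩, this.2⟩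
  have hnm : m ∉ (Finset.Icc 1 k).filter fun v => NBig σ v := by
    intro hx
    have := Finset.mem_Icc.mp (Finset.mem_filter.mp hx).1
    omega
  have h1 : (insert m ((Finset.Icc 1 k).filter fun v => NBig σ v)).card =
      ((Finset.Icc 1 k).filter fun v => NBig σ v).card + 1 :=
    Finset.card_insert_of_notMem hnm
  have h2 := Finset.card_le_card hsub
  unfold Nrk
  omega

lemma Nrk_pos {k : ℕ} (hk : 1 ≤ k) (hbig : NBig σ k) : 1 ≤ Nrk σ k := by
  have : k ∈ (Finset.Icc 1 k).filter fun v => NBig σ v :=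
    Finset.mem_filter.mpr ⟨Finset.mem_Icc.mpr ⟨hk, le_refl _⟩, hbig⟩
  exact Finset.card_pos.mpr ⟨k, this⟩

lemma Nrk_succ (m : ℕ) :
    Nrk σ (m + 1) = Nrk σ m + (if NBig σ (m + 1) then 1 else 0) := by
  unfold Nrk
  have : Finset.Icc 1 (m + 1) = insert (m + 1) (Finset.Icc 1 m) := by
    ext x; simp only [Finset.mem_Icc, Finset.mem_insert]; omega
  rw [this, Finset.filter_insert]
  split_ifs with hb
  · rw [Finset.card_insert_of_notMem (by
      intro hx
      have := Finset.mem_Icc.mp (Finset.mem_filter.mp hx).1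
      omega)]
  · rfl

lemma Nrk_surj {m r : ℕ} (hr1 : 1 ≤ r) (hrm : r ≤ Nrk σ m) :
    ∃ v, 1 ≤ v ∧ v ≤ m ∧ NBig σ v ∧ Nrk σ v = r := by
  induction m with
  | zero =>
    have : Nrk σ 0 = 0 := by unfold Nrk; simp
    omega
  | succ m ih =>
    rw [Nrk_succ] at hrm
    split_ifs at hrm with hb
    · rcases Nat.lt_or_ge (Nrk σ m) r with hlt | hge
      · refine ⟨m + 1, by omega, le_refl _, hb, ?_⟩
        rw [Nrk_succ, if_pos hb]; omega
      · obtain ⟨v, hv⟩ := ih (by omega)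
        exact ⟨v, hv.1, by omega, hv.2.2⟩
    · obtain ⟨v, hv⟩ := ih (by omega)
      exact ⟨v, hv.1, by omega, hv.2.2⟩

lemma Nrk_big_eq {u v : ℕ} (hu1 : 1 ≤ u) (hv1 : 1 ≤ v) (hbu : NBig σ u) (hbv : NBig σ v)
    (he : Nrk σ u = Nrk σ v) : u = v := by
  rcases lt_trichotomy u v with hlt | he' | hgt
  · have := Nrk_lt hv1 hlt hbv; omega
  · exact he'
  · have := Nrk_lt hu1 hgt hbu; omega

end Nrk

/-- The position (after one move) of a singleton ball. -/
def sPos (σ : ℕ → ℕ) (k : ℕ) : ℕ := if σ k < k then σ k + 1 else σ (k - 1)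

namespace GoodInv

variable {n : ℕ} {σ : ℕ → ℕ}

lemma dn_one {k : ℕ} (h : GoodInv n σ) (hd : k - 1 < σ (k - 1)) : 2 ≤ k := by
  by_contra hc
  have : k - 1 = 0 := by omega
  rw [this, h.zero] at hd
  omega

/-- If `k` is the top of an arc, the partner of `σ k + 1` is smaller than `k`. -/
lemma E1 (h : GoodInv n σ) {k v : ℕ} (hk1 : 1 ≤ k) (hk2 : k ≤ n) (hup : σ k < k)
    (hv1 : 1 ≤ v) (hv2 : v ≤ n) (hσv : σ v = σ k + 1) : v < k := by
  have ha := h.invol k hk1 hk2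
  have ham := h.mem k hk1 hk2
  have hvm := h.mem v hv1 hv2
  have hx := h.invol v hv1 hv2
  have hb : σ (σ k + 1) = v := by rw [← hσv]; exact hx
  rcases lt_trichotomy (σ k + 1) k with hlt | he | hgt
  · rcases lt_trichotomy v k with h1 | h2 | h3
    · exact h1
    · rw [h2] at hσv; omega
    · exact (h.nc (σ k) (σ k + 1) ham.1 (by omega) (by omega) (by omega) (by omega)).elim
  · rw [he] at hb; omega
  · omega

/-- A non-top ball right after the bottom of an arc sits strictly left of the arc's top. -/
lemma E3 (h : GoodInv n σ) {k : ℕ} (hk2 : k ≤ n) (hnup : ¬ σ k < k)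
    (hdn : k - 1 < σ (k - 1)) : σ k < σ (k - 1) := by
  have hk1 : 2 ≤ k := h.dn_one hdn
  have ham := h.mem (k - 1) (by omega) (by omega)
  have hinva := h.invol (k - 1) (by omega) (by omega)
  have hkm := h.mem k (by omega) hk2
  have hinvk := h.invol k (by omega) hk2
  have hkb : k < σ (k - 1) := by
    rcases lt_trichotomy k (σ (k - 1)) with h1 | h2 | h3
    · exact h1
    · rw [← h2] at hinva; omega
    · omega
  rcases lt_trichotomy (σ k) (σ (k - 1)) with h1 | h2 | h3
  · exact h1
  · rw [h2] at hinvk; omega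
  · exact (h.nc (k - 1) k (by omega) (by omega) hkb (by omega) (by omega)).elim

/-- The successor of the bottom of a non-adjacent arc is not the top of an arc. -/
lemma E5b (h : GoodInv n σ) {a : ℕ} (ha1 : 1 ≤ a) (hab : a + 1 < σ a) (hbn : σ a ≤ n) :
    ¬ (σ (a + 1) < a + 1) := by
  intro hup
  have hm := h.mem (a + 1) (by omega) (by omega)
  have hc := h.invol (a + 1) (by omega) (by omega)
  rcases lt_trichotomy (σ (a + 1)) a with h1 | h2 | h3
  · exact (h.nc (σ (a + 1)) a hm.1 h1 (by omega) (by omega) hbn).elim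
  · rw [h2] at hc
    have := h.invol a ha1 (by omega)
    omega
  · omega

/-- Two singleton balls at adjacent positions: values decrease from left to right. -/
lemma ADJ (h : GoodInv n σ) {k k' : ℕ} (hk1 : 1 ≤ k) (hk2 : k ≤ n)
    (hk1' : 1 ≤ k') (hk2' : k' ≤ n) (hs : Sing σ k) (hs' : Sing σ k')
    (hpos : sPos σ k' = sPos σ k + 1) : k' < k := by
  unfold sPos at hpos
  by_cases hu : σ k < k
  · by_cases hu' : σ k' < k'
    · rw [if_pos hu, if_pos hu'] at hpos
      exact h.E1 hk1 hk2 hu hk1' hk2' (by omega)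
    · rw [if_pos hu, if_neg hu'] at hpos
      have hd' : k' - 1 < σ (k' - 1) := by
        rcases hs' with h1 | h2; · omega
        · exact h2
      have hk'2 : 2 ≤ k' := h.dn_one hd'
      have hinvk := h.invol k hk1 hk2
      have hmk := h.mem k hk1 hk2
      have hinva' := h.invol (k' - 1) (by omega) (by omega)
      have hma' := h.mem (k' - 1) (by omega) (by omega)
      rcases lt_trichotomy (k' - 1) (σ k) with h1 | h2 | h3
      · omega
      · rw [← h2] at hinvk
        omega
      · have ha'e : k' - 1 = σ k + 1 := by omega
        rcases lt_trichotomy (σ k + 2) k with hc1 | hc2 | hc3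
        · omega
        · have hpos2 : σ (k' - 1) = σ k + 2 := by omega
          rw [hpos2] at hinva'
          have h6 : σ (σ k + 2) = σ k := by rw [hc2]
          omega
        · have h6 : σ (k' - 1) = σ k := by
            have hek : k' - 1 = k := by omega
            rw [hek]
          omega
  · have hd : k - 1 < σ (k - 1) := by
      rcases hs with h1 | h2; · omega
      · exact h2
    have hkk2 : 2 ≤ k := h.dn_one hd
    have hinva := h.invol (k - 1) (by omega) (by omega)
    have hma := h.mem (k - 1) (by omega) (by omega)
    by_cases hu' : σ k' < k'
    · rw [if_neg hu, if_pos hu'] at hpos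
      have : σ k' = σ (k - 1) := by omega
      have := h.inj hk1' hk2' (by omega : 1 ≤ k - 1) (by omega) this
      omega
    · rw [if_neg hu, if_neg hu'] at hpos
      have hd' : k' - 1 < σ (k' - 1) := by
        rcases hs' with h1 | h2; · omega
        · exact h2
      have hk'2 : 2 ≤ k' := h.dn_one hd'
      have hinva' := h.invol (k' - 1) (by omega) (by omega)
      have hma' := h.mem (k' - 1) (by omega) (by omega)
      rcases lt_trichotomy (k' - 1) (σ (k - 1)) with h1 | h2 | h3
      · rcases lt_trichotomy (k' - 1) (k - 1) with g1 | g2 | g3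
        · omega
        · have h6 : σ (k' - 1) = σ (k - 1) := by rw [g2]
          omega
        · exact (h.nc (k - 1) (k' - 1) (by omega) (by omega) h1 (by omega) (by omega)).elim
      · have h6 : σ (k' - 1) = k - 1 := by rw [h2]; exact hinva
        omega
      · omega

/-- Auxiliary injectivity: a top-target cannot coincide with a case-2 target. -/
lemma aux_uc2 (h : GoodInv n σ) {k k' : ℕ} (hk1 : 1 ≤ k) (hk2 : k ≤ n)
    (hk2' : k' ≤ n) (hu : σ k < k) (hd' : k' - 1 < σ (k' - 1))
    (he : σ (k' - 1) = σ k + 1) : k' = k := by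
  have hk'2 : 2 ≤ k' := h.dn_one hd'
  have hinvk := h.invol k hk1 hk2
  have hmk := h.mem k hk1 hk2
  have hinva' := h.invol (k' - 1) (by omega) (by omega)
  have hma' := h.mem (k' - 1) (by omega) (by omega)
  rcases lt_trichotomy (k' - 1) (σ k) with h1 | h2 | h3
  · rcases lt_trichotomy (σ k + 1) k with g1 | g2 | g3
    · exact (h.nc (k' - 1) (σ k) (by omega) h1 (by omega) (by omega) (by omega)).elim
    · have : k' - 1 = σ k := h.inj (by omega) (by omega) hmk.1 hmk.2 (by omega)
      omega
    · omega
  · rw [← h2] at hinvk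
    omega
  · omega

/-- Singleton positions are injective. -/
lemma sPos_inj (h : GoodInv n σ) {k k' : ℕ} (hk1 : 1 ≤ k) (hk2 : k ≤ n)
    (hk1' : 1 ≤ k') (hk2' : k' ≤ n) (hs : Sing σ k) (hs' : Sing σ k')
    (he : sPos σ k' = sPos σ k) : k' = k := by
  unfold sPos at he
  by_cases hu : σ k < k
  · by_cases hu' : σ k' < k'
    · rw [if_pos hu, if_pos hu'] at he
      exact h.inj hk1' hk2' hk1 hk2 (by omega)
    · rw [if_pos hu, if_neg hu'] at he
      have hd' : k' - 1 < σ (k' - 1) := by rcases hs' with h1 | h2; · omega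
                                           · exact h2
      exact h.aux_uc2 hk1 hk2 hk2' hu hd' (by omega)
  · have hd : k - 1 < σ (k - 1) := by rcases hs with h1 | h2; · omega
                                      · exact h2
    by_cases hu' : σ k' < k'
    · rw [if_neg hu, if_pos hu'] at he
      exact (h.aux_uc2 hk1' hk2' hk2 hu' hd (by omega)).symm
    · rw [if_neg hu, if_neg hu'] at he
      have hd' : k' - 1 < σ (k' - 1) := by rcases hs' with h1 | h2; · omega
                                           · exact h2
      have h2 := h.dn_one hd
      have h2' := h.dn_one hd'
      have := h.inj (a := k' - 1) (b := k - 1) (by omega) (by omega) (by omega) (by omega) he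
      omega

end GoodInv

open scoped Classical in
/-- The scheduled position of ball `k` after `1 + t` box-ball moves. -/
noncomputable def postP (n : ℕ) (σ : ℕ → ℕ) (t k : ℕ) : ℕ :=
  if Sing σ k then sPos σ k + t else n + Nrk σ k + t * Nrk σ n

lemma postP_sing {n t k : ℕ} {σ : ℕ → ℕ} (hs : Sing σ k) :
    postP n σ t k = sPos σ k + t := if_pos hs

lemma postP_big {n t k : ℕ} {σ : ℕ → ℕ} (hb : NBig σ k) :
    postP n σ t k = n + Nrk σ k + t * Nrk σ n := by
  unfold postP
  rw [if_neg]
  unfold Sing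
  unfold NBig at hb
  tauto

lemma not_sing_iff {k : ℕ} {σ : ℕ → ℕ} : ¬ Sing σ k ↔ NBig σ k := by
  unfold Sing NBig; tauto

namespace GoodInv

variable {n : ℕ} {σ : ℕ → ℕ}

lemma sing_two (h : GoodInv n σ) {k : ℕ} (hk1 : 1 ≤ k) (hk2 : k ≤ n) (hs : Sing σ k) :
    2 ≤ k := by
  rcases hs with h1 | h2
  · have := h.mem k hk1 hk2; omega
  · exact h.dn_one h2

lemma sPos_bounds (h : GoodInv n σ) {k : ℕ} (hk1 : 1 ≤ k) (hk2 : k ≤ n) (hs : Sing σ k) :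
    2 ≤ sPos σ k ∧ sPos σ k ≤ n := by
  unfold sPos
  split_ifs with hu
  · have := h.mem k hk1 hk2; omega
  · have hd : k - 1 < σ (k - 1) := by rcases hs with h1 | h2; · omega
                                      · exact h2
    have h2 := h.dn_one hd
    have := h.mem (k - 1) (by omega) (by omega)
    omega

lemma bigL_pos (h : GoodInv n σ) {k : ℕ} (hk1 : 1 ≤ k) (hk2 : k ≤ n) (hb : NBig σ k) :
    1 ≤ Nrk σ n := le_trans (Nrk_pos hk1 hb) (Nrk_mono hk2)

lemma big_one (h : GoodInv n σ) (hn : 1 ≤ n) : NBig σ 1 := by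
  constructor
  · have := h.mem 1 (le_refl _) hn; omega
  · simp [h.zero]

lemma Nrk_one (h : GoodInv n σ) (hn : 1 ≤ n) : Nrk σ 1 = 1 := by
  have h0 : Nrk σ 0 = 0 := by unfold Nrk; simp
  have h1 := Nrk_succ (σ := σ) 0
  rw [if_pos (h.big_one hn)] at h1
  norm_num at h1
  omega

lemma big_rank_one (h : GoodInv n σ) {v : ℕ} (hv1 : 1 ≤ v) (hv2 : v ≤ n)
    (hb : NBig σ v) (hr : Nrk σ v = 1) : v = 1 :=
  Nrk_big_eq hv1 (le_refl _) hb (h.big_one (by omega)) (by rw [hr, h.Nrk_one (by omega)])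

lemma postP_inj (h : GoodInv n σ) (t : ℕ) :
    InjOnIcc n (fun k => (postP n σ t k : ℤ)) := by
  intro v v' hv1 hv2 hv1' hv2' he
  have he2 : ((postP n σ t v : ℕ) : ℤ) = ((postP n σ t v' : ℕ) : ℤ) := he
  have he' : postP n σ t v = postP n σ t v' := by exact_mod_cast he2
  by_cases hs : Sing σ v <;> by_cases hs' : Sing σ v'
  · rw [postP_sing hs, postP_sing hs'] at he'
    exact h.sPos_inj hv1' hv2' hv1 hv2 hs' hs (by omega)
  · rw [postP_sing hs, postP_big (not_sing_iff.mp hs')] at he'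
    have hb := h.sPos_bounds hv1 hv2 hs
    have h1 := Nrk_pos hv1' (not_sing_iff.mp hs')
    have hL := h.bigL_pos hv1' hv2' (not_sing_iff.mp hs')
    have : t * 1 ≤ t * Nrk σ n := Nat.mul_le_mul_left t hL
    omega
  · rw [postP_big (not_sing_iff.mp hs), postP_sing hs'] at he'
    have hb := h.sPos_bounds hv1' hv2' hs'
    have h1 := Nrk_pos hv1 (not_sing_iff.mp hs)
    have hL := h.bigL_pos hv1 hv2 (not_sing_iff.mp hs)
    have : t * 1 ≤ t * Nrk σ n := Nat.mul_le_mul_left t hL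
    omega
  · rw [postP_big (not_sing_iff.mp hs), postP_big (not_sing_iff.mp hs')] at he'
    exact Nrk_big_eq hv1 hv1' (not_sing_iff.mp hs) (not_sing_iff.mp hs') (by omega)

lemma sigma_inj (h : GoodInv n σ) : InjOnIcc n (fun k => (σ k : ℤ)) := by
  intro v v' a1 a2 a3 a4 hh
  have hh2 : ((σ v : ℕ) : ℤ) = ((σ v' : ℕ) : ℤ) := hh
  exact h.inj a1 a2 a3 a4 (by exact_mod_cast hh2)

/-- First application: the first box-ball move on a noncrossing involution. -/
lemma moveA (h : GoodInv n σ) :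
    BBMove n (placedC n (fun v => (σ v : ℤ))) =
      placedC n (fun v => (postP n σ 0 v : ℤ)) := by
  refine BBMove_placed n _ _ (h.sigma_inj) (h.postP_inj 0) ?_ ?_ ?_
  · -- h1 : position < target
    intro k hk1 hk2
    by_cases hs : Sing σ k
    · rw [postP_sing hs]
      unfold sPos
      split_ifs with hu
      · push_cast; omega
      · have hd : k - 1 < σ (k - 1) := by rcases hs with h1 | h2; · omega
                                          · exact h2
        have := h.E3 hk2 hu hd
        push_cast; omega
    · rw [postP_big (not_sing_iff.mp hs)]
      have := h.mem k hk1 hk2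
      have := Nrk_pos hk1 (not_sing_iff.mp hs)
      push_cast; omega
  · -- h3 : target differs from positions of not-yet-moved balls
    intro k v hk1 hk2 hkv hv2 hne
    have hv1 : 1 ≤ v := by omega
    by_cases hs : Sing σ k
    · rw [postP_sing hs] at hne
      unfold sPos at hne
      split_ifs at hne with hu
      · -- σ v = σ k + 1
        have := h.E1 hk1 hk2 hu hv1 hv2 (by exact_mod_cast hne.symm)
        omega
      · have hd : k - 1 < σ (k - 1) := by rcases hs with h1 | h2; · omega
                                          · exact h2
        have h2k := h.dn_one hd
        have := h.inj hv1 hv2 (by omega : 1 ≤ k - 1) (by omega)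
          (by exact_mod_cast hne.symm : σ v = σ (k - 1))
        omega
    · rw [postP_big (not_sing_iff.mp hs)] at hne
      have := h.mem v hv1 hv2
      have := Nrk_pos hk1 (not_sing_iff.mp hs)
      have : ((n + Nrk σ k + 0 * Nrk σ n : ℕ) : ℤ) = (σ v : ℤ) := hne
      omega
  · -- h2 : every box strictly between position and target is occupied
    intro k hk1 hk2 j hj1 hj2
    by_cases hs : Sing σ k
    · rw [postP_sing hs] at hj2
      unfold sPos at hj2
      split_ifs at hj2 with hu
      · push_cast at hj2; omega
      · -- case 2: j strictly inside the arc (k-1, σ (k-1))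
        have hd : k - 1 < σ (k - 1) := by rcases hs with h1 | h2; · exact absurd h1 hu
                                          · exact h2
        have h2k := h.dn_one hd
        have hma := h.mem (k - 1) (by omega) (by omega)
        have hmk := h.mem k hk1 hk2
        have hjn : j = ((j.toNat : ℕ) : ℤ) := by omega
        set jn := j.toNat with hjndef
        have hj1' : σ k < jn := by omega
        have hj2' : jn < σ (k - 1) := by omega
        have hain : k - 1 < jn := by omega
        have hins := h.inside (a := k - 1) (j := jn) (by omega) hain hj2' (by omega)
        have hjm := h.mem jn (by omega) (by omega)
        have hji := h.invol jn (by omega) (by omega)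
        have hneq : σ jn ≠ k := by
          intro hc
          rw [hc] at hji
          omega
        refine ⟨σ jn, by omega, by omega, Or.inl ⟨by omega, by push_cast; omega⟩⟩
    · -- big-run ball
      have hb := not_sing_iff.mp hs
      rw [postP_big hb] at hj2
      have hmk := h.mem k hk1 hk2
      rcases le_or_gt j (n : ℤ) with hzone | hzone
      · -- occupied by an unmoved or already-moved singleton ball
        have hjn : j = ((j.toNat : ℕ) : ℤ) := by omega
        set jn := j.toNat with hjndef
        have hj1' : σ k < jn := by omega
        have hj2' : jn ≤ n := by omega
        have hjm := h.mem jn (by omega) (by omega)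
        have hji := h.invol jn (by omega) (by omega)
        have hneq : σ jn ≠ k := by
          intro hc
          rw [hc] at hji
          omega
        rcases lt_or_ge k (σ jn) with hgt | hlt
        · exact ⟨σ jn, by omega, by omega, Or.inl ⟨by omega, by push_cast; omega⟩⟩
        · -- σ jn < k : the ball σ jn + 1 has already moved onto box jn
          have hup : σ jn < jn := by
            rcases hb with ⟨hb1, _⟩
            omega
          have hne2 : σ jn + 1 < jn := by
            by_contra hc
            have : jn = σ jn + 1 := by omega
            rcases hb with ⟨hb1, _⟩
            omega
          have hntop := h.E5b (a := σ jn) (by omega) (by omega : σ jn + 1 < σ (σ jn))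
            (by omega : σ (σ jn) ≤ n)
          have hvlt : σ jn + 1 < k := by
            rcases lt_trichotomy (σ jn + 1) k with g1 | g2 | g3
            · exact g1
            · exfalso
              rcases hb with ⟨_, hb2⟩
              have : σ (k - 1) = jn := by rw [← g2]; simp [hji]
              omega
            · omega
          refine ⟨σ jn + 1, by omega, by omega, Or.inr ⟨by omega, ?_⟩⟩
          have hsing : Sing σ (σ jn + 1) := by
            right
            have : σ jn + 1 - 1 = σ jn := by omega
            rw [this]
            omega
          rw [postP_sing hsing]
          unfold sPos
          rw [if_neg hntop]
          have : σ jn + 1 - 1 = σ jn := by omega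
          rw [this, hji]
          push_cast
          omega
      · -- occupied by an already-moved big ball
        have hr1 : (1 : ℤ) ≤ j - n := by omega
        have hr2 : j - n < Nrk σ k := by push_cast at hj2; omega
        have hrn : j - n = (((j - n).toNat : ℕ) : ℤ) := by omega
        set r := (j - n).toNat with hrdef
        obtain ⟨v, hv1, hv2, hvb, hvr⟩ := Nrk_surj (σ := σ) (m := n) (r := r)
          (by omega) (by have := Nrk_mono (σ := σ) hk2; omega)
        have hvk : v < k := by
          by_contra hc
          have := Nrk_mono (σ := σ) (by omega : k ≤ v)
          omega
        refine ⟨v, hv1, hv2, Or.inr ⟨hvk, ?_⟩⟩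
        rw [postP_big hvb]
        push_cast
        omega

/-- Subsequent applications: box-ball moves on the steady configuration. -/
lemma moveB (h : GoodInv n σ) (t : ℕ) :
    BBMove n (placedC n (fun v => (postP n σ t v : ℤ))) =
      placedC n (fun v => (postP n σ (t + 1) v : ℤ)) := by
  have hmul : (t + 1) * Nrk σ n = t * Nrk σ n + Nrk σ n := by ring
  have hmulZ : (((t + 1) * Nrk σ n : ℕ) : ℤ) = ((t * Nrk σ n : ℕ) : ℤ) + ((Nrk σ n : ℕ) : ℤ) := by
    push_cast
    ring
  refine BBMove_placed n _ _ (h.postP_inj t) (h.postP_inj (t + 1)) ?_ ?_ ?_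
  · intro k hk1 hk2
    by_cases hs : Sing σ k
    · rw [postP_sing hs, postP_sing hs]
      have : sPos σ k + t < sPos σ k + (t + 1) := by omega
      exact_mod_cast this
    · have hb := not_sing_iff.mp hs
      rw [postP_big hb, postP_big hb]
      have hL := h.bigL_pos hk1 hk2 hb
      have : n + Nrk σ k + t * Nrk σ n < n + Nrk σ k + (t + 1) * Nrk σ n := by omega
      exact_mod_cast this
  · -- h3
    intro k v hk1 hk2 hkv hv2 hne
    have hv1 : 1 ≤ v := by omega
    by_cases hs : Sing σ k
    · rw [postP_sing hs] at hne
      have hsb := h.sPos_bounds hk1 hk2 hs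
      by_cases hs' : Sing σ v
      · rw [postP_sing hs'] at hne
        have hne2 : ((sPos σ k + (t + 1) : ℕ) : ℤ) = ((sPos σ v + t : ℕ) : ℤ) := hne
        have : sPos σ v = sPos σ k + 1 := by exact_mod_cast (by omega : ((sPos σ v : ℕ) : ℤ) = ((sPos σ k + 1 : ℕ) : ℤ))
        have := h.ADJ hk1 hk2 hv1 hv2 hs hs' this
        omega
      · have hb' := not_sing_iff.mp hs'
        rw [postP_big hb'] at hne
        have h1 := Nrk_pos hv1 hb'
        have hL := h.bigL_pos hv1 hv2 hb'
        have ht : t * 1 ≤ t * Nrk σ n := Nat.mul_le_mul (le_refl t) hL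
        have hne2 : ((sPos σ k + (t + 1) : ℕ) : ℤ) = ((n + Nrk σ v + t * Nrk σ n : ℕ) : ℤ) := hne
        have heq : sPos σ k + (t + 1) = n + Nrk σ v + t * Nrk σ n := by exact_mod_cast hne2
        have hrv : Nrk σ v = 1 := by omega
        have := h.big_rank_one hv1 hv2 hb' hrv
        have := h.sing_two hk1 hk2 hs
        omega
    · have hb := not_sing_iff.mp hs
      rw [postP_big hb] at hne
      have h1 := Nrk_pos hk1 hb
      have hL := h.bigL_pos hk1 hk2 hb
      by_cases hs' : Sing σ v
      · rw [postP_sing hs'] at hne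
        have hsb := h.sPos_bounds hv1 hv2 hs'
        have hne2 : ((n + Nrk σ k + (t + 1) * Nrk σ n : ℕ) : ℤ) = ((sPos σ v + t : ℕ) : ℤ) := hne
        have : n + Nrk σ k + (t + 1) * Nrk σ n = sPos σ v + t := by exact_mod_cast hne2
        have hm2 : (t + 1) * 1 ≤ (t + 1) * Nrk σ n := Nat.mul_le_mul (le_refl (t + 1)) hL
        omega
      · have hb' := not_sing_iff.mp hs'
        rw [postP_big hb'] at hne
        have hL' := Nrk_mono (σ := σ) hv2
        have hne2 : ((n + Nrk σ k + (t + 1) * Nrk σ n : ℕ) : ℤ) = ((n + Nrk σ v + t * Nrk σ n : ℕ) : ℤ) := hne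
        have : n + Nrk σ k + (t + 1) * Nrk σ n = n + Nrk σ v + t * Nrk σ n := by exact_mod_cast hne2
        omega
  · -- h2
    intro k hk1 hk2 j hj1 hj2
    by_cases hs : Sing σ k
    · rw [postP_sing hs] at hj1 hj2
      exfalso
      have c1 : ((sPos σ k + t : ℕ) : ℤ) < j := hj1
      have c2 : j < ((sPos σ k + (t + 1) : ℕ) : ℤ) := hj2
      omega
    · have hb := not_sing_iff.mp hs
      rw [postP_big hb] at hj1 hj2
      have h1 := Nrk_pos hk1 hb
      have hL := h.bigL_pos hk1 hk2 hb
      have hLk := Nrk_mono (σ := σ) hk2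
      have c1 : ((n + Nrk σ k + t * Nrk σ n : ℕ) : ℤ) < j := hj1
      have c2 : j < ((n + Nrk σ k + (t + 1) * Nrk σ n : ℕ) : ℤ) := hj2
      rcases le_or_gt j ((n : ℤ) + (Nrk σ n : ℕ) + (t * Nrk σ n : ℕ)) with hzone | hzone
      · -- unmoved bigger big ball
        set r := (j - (n : ℤ) - ((t * Nrk σ n : ℕ) : ℤ)).toNat with hrdef
        have hrn : (r : ℤ) = j - (n : ℤ) - ((t * Nrk σ n : ℕ) : ℤ) := by omega
        obtain ⟨v, hv1, hv2, hvb, hvr⟩ := Nrk_surj (σ := σ) (m := n) (r := r)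
          (by omega) (by omega)
        have hvk : k < v := by
          rcases lt_trichotomy k v with g1 | g2 | g3
          · exact g1
          · rw [← g2] at hvr
            omega
          · have := Nrk_mono (σ := σ) (by omega : v ≤ k)
            omega
        refine ⟨v, hv1, hv2, Or.inl ⟨by omega, ?_⟩⟩
        rw [postP_big hvb]
        have : ((n + Nrk σ v + t * Nrk σ n : ℕ) : ℤ) = j := by
          push_cast
          omega
        exact this
      · -- already-moved smaller big ball
        set r := (j - (n : ℤ) - (((t + 1) * Nrk σ n : ℕ) : ℤ)).toNat with hrdef
        have hrn : (r : ℤ) = j - (n : ℤ) - (((t + 1) * Nrk σ n : ℕ) : ℤ) := by omega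
        obtain ⟨v, hv1, hv2, hvb, hvr⟩ := Nrk_surj (σ := σ) (m := n) (r := r)
          (by omega) (by omega)
        have hvk : v < k := by
          by_contra hc
          have := Nrk_mono (σ := σ) (by omega : k ≤ v)
          omega
        refine ⟨v, hv1, hv2, Or.inr ⟨hvk, ?_⟩⟩
        rw [postP_big hvb]
        have : ((n + Nrk σ v + (t + 1) * Nrk σ n : ℕ) : ℤ) = j := by omega
        exact this

end GoodInv

namespace GoodInv

variable {n : ℕ} {σ : ℕ → ℕ}

lemma bigL_pos' (h : GoodInv n σ) (hn : 1 ≤ n) : 1 ≤ Nrk σ n := by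
  have h1 := h.Nrk_one hn
  have h2 := Nrk_mono (σ := σ) hn
  omega

lemma BBt_eq (h : GoodInv n σ) (t : ℕ) :
    BB n t (placedC n (fun v => (postP n σ 0 v : ℤ))) =
      placedC n (fun v => (postP n σ t v : ℤ)) := by
  induction t with
  | zero => rfl
  | succ t ih =>
    show (BBMove n)^[t + 1] _ = _
    rw [Function.iterate_succ_apply']
    show BBMove n (BB n t _) = _
    rw [ih]
    exact h.moveB t

lemma val_sing (h : GoodInv n σ) (t : ℕ) {k : ℕ} (hk1 : 1 ≤ k) (hk2 : k ≤ n)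
    (hs : Sing σ k) :
    placedC n (fun v => (postP n σ t v : ℤ)) ((sPos σ k + t : ℕ) : ℤ) = k :=
  placedC_eq (h.postP_inj t) hk1 hk2 (by rw [postP_sing hs])

lemma val_big (h : GoodInv n σ) (t : ℕ) {v : ℕ} (hv1 : 1 ≤ v) (hv2 : v ≤ n)
    (hb : NBig σ v) :
    placedC n (fun u => (postP n σ t u : ℤ)) ((n + Nrk σ v + t * Nrk σ n : ℕ) : ℤ) = v :=
  placedC_eq (h.postP_inj t) hv1 hv2 (by rw [postP_big hb])

lemma empty_after (h : GoodInv n σ) (hn : 1 ≤ n) (t : ℕ) (j : ℤ)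
    (hj : ((n + Nrk σ n + t * Nrk σ n : ℕ) : ℤ) < j) :
    placedC n (fun u => (postP n σ t u : ℤ)) j = n + 1 := by
  refine placedC_empty ?_
  intro v hv1 hv2 hne
  have hL := h.bigL_pos' hn
  have ht : t * 1 ≤ t * Nrk σ n := Nat.mul_le_mul (le_refl t) hL
  by_cases hs : Sing σ v
  · rw [postP_sing hs] at hne
    have hsb := h.sPos_bounds hv1 hv2 hs
    omega
  · rw [postP_big (not_sing_iff.mp hs)] at hne
    have := Nrk_mono (σ := σ) hv2
    omega

/-- A singleton ball is a maximal run (of length one) at every time `t`. -/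
lemma sing_run (h : GoodInv n σ) (t : ℕ) {k : ℕ} (hk1 : 1 ≤ k) (hk2 : k ≤ n)
    (hs : Sing σ k) :
    IsRun n (placedC n (fun v => (postP n σ t v : ℤ)))
      ((sPos σ k + t : ℕ) : ℤ) ((sPos σ k + t : ℕ) : ℤ) := by
  have hval := h.val_sing t hk1 hk2 hs
  have hsb := h.sPos_bounds hk1 hk2 hs
  have hL := h.bigL_pos' (by omega) 
  have ht : t * 1 ≤ t * Nrk σ n := Nat.mul_le_mul (le_refl t) hL
  refine ⟨le_refl _, ?_, ?_, ?_, ?_⟩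
  · intro j hj1 hj2
    have : j = ((sPos σ k + t : ℕ) : ℤ) := le_antisymm hj2 hj1
    rw [this, hval]
    omega
  · intro j hj1 hj2
    omega
  · rw [hval]
    rcases placedC_cases (n := n) (fun v => (postP n σ t v : ℤ))
      (((sPos σ k + t : ℕ) : ℤ) - 1) with hemp | ⟨hu1, hu2, hu3⟩
    · rw [hemp]; omega
    · set u := placedC n (fun v => (postP n σ t v : ℤ)) (((sPos σ k + t : ℕ) : ℤ) - 1)
      by_cases hs' : Sing σ u
      · rw [postP_sing hs'] at hu3
        have hadj : sPos σ k = sPos σ u + 1 := by omega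
        have := h.ADJ hu1 hu2 hk1 hk2 hs' hs hadj
        omega
      · rw [postP_big (not_sing_iff.mp hs')] at hu3
        have h1 := Nrk_pos hu1 (not_sing_iff.mp hs')
        omega
  · rw [hval]
    rcases placedC_cases (n := n) (fun v => (postP n σ t v : ℤ))
      (((sPos σ k + t : ℕ) : ℤ) + 1) with hemp | ⟨hu1, hu2, hu3⟩
    · exact Or.inl hemp
    · set u := placedC n (fun v => (postP n σ t v : ℤ)) (((sPos σ k + t : ℕ) : ℤ) + 1)
      right
      by_cases hs' : Sing σ u
      · rw [postP_sing hs'] at hu3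
        have hadj : sPos σ u = sPos σ k + 1 := by omega
        exact h.ADJ hk1 hk2 hu1 hu2 hs hs' hadj
      · rw [postP_big (not_sing_iff.mp hs')] at hu3
        have h1 := Nrk_pos hu1 (not_sing_iff.mp hs')
        have hru : Nrk σ u = 1 := by omega
        have := h.big_rank_one hu1 hu2 (not_sing_iff.mp hs') hru
        have := h.sing_two hk1 hk2 hs
        omega

/-- The big increasing run is a maximal run at every time `t`. -/
lemma big_run (h : GoodInv n σ) (hn : 1 ≤ n) (t : ℕ) :
    IsRun n (placedC n (fun v => (postP n σ t v : ℤ)))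
      ((n + 1 + t * Nrk σ n : ℕ) : ℤ) ((n + Nrk σ n + t * Nrk σ n : ℕ) : ℤ) := by
  have hL := h.bigL_pos' hn
  have hval1 : placedC n (fun v => (postP n σ t v : ℤ)) ((n + 1 + t * Nrk σ n : ℕ) : ℤ) = 1 := by
    have := h.val_big t (v := 1) (le_refl _) hn (h.big_one hn)
    rw [h.Nrk_one hn] at this
    exact this
  refine ⟨by omega, ?_, ?_, ?_, ?_⟩
  · -- each box in the run holds a ball
    intro j hj1 hj2
    set r := (j - (n : ℤ) - ((t * Nrk σ n : ℕ) : ℤ)).toNat with hrdef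
    obtain ⟨v, hv1, hv2, hvb, hvr⟩ := Nrk_surj (σ := σ) (m := n) (r := r) (by omega) (by omega)
    have hpos : j = ((n + Nrk σ v + t * Nrk σ n : ℕ) : ℤ) := by omega
    rw [hpos, h.val_big t hv1 hv2 hvb]
    omega
  · -- increasing within the run
    intro j hj1 hj2
    set r := (j - (n : ℤ) - ((t * Nrk σ n : ℕ) : ℤ)).toNat with hrdef
    obtain ⟨v, hv1, hv2, hvb, hvr⟩ := Nrk_surj (σ := σ) (m := n) (r := r) (by omega) (by omega)
    obtain ⟨v', hv1', hv2', hvb', hvr'⟩ := Nrk_surj (σ := σ) (m := n) (r := r + 1)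
      (by omega) (by omega)
    have hpos : j = ((n + Nrk σ v + t * Nrk σ n : ℕ) : ℤ) := by omega
    have hpos' : j + 1 = ((n + Nrk σ v' + t * Nrk σ n : ℕ) : ℤ) := by omega
    rw [hpos', hpos, h.val_big t hv1 hv2 hvb, h.val_big t hv1' hv2' hvb']
    by_contra hc
    have := Nrk_mono (σ := σ) (by omega : v' ≤ v)
    omega
  · -- left boundary
    rw [hval1]
    rcases placedC_cases (n := n) (fun v => (postP n σ t v : ℤ))
      (((n + 1 + t * Nrk σ n : ℕ) : ℤ) - 1) with hemp | ⟨hu1, hu2, hu3⟩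
    · rw [hemp]; omega
    · set u := placedC n (fun v => (postP n σ t v : ℤ)) (((n + 1 + t * Nrk σ n : ℕ) : ℤ) - 1)
      have hune : u ≠ 1 := by
        intro hc
        rw [hc] at hu3
        rw [postP_big (h.big_one hn), h.Nrk_one hn] at hu3
        omega
      omega
  · -- right boundary: empty
    exact Or.inl (h.empty_after hn t _ (by omega))

/-- The main steady-state lemma for the abstract development. -/
lemma steady (h : GoodInv n σ) :
    SteadyState n (placedC n (fun v => (postP n σ 0 v : ℤ))) := by
  intro j hj1 hjn
  rcases placedC_cases (n := n) (fun v => (postP n σ 0 v : ℤ)) j with hemp | ⟨hb1, hb2, hb3⟩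
  · omega
  set k := placedC n (fun v => (postP n σ 0 v : ℤ)) j with hkdef
  have hn1 : 1 ≤ n := by omega
  have hL := h.bigL_pos' hn1
  by_cases hs : Sing σ k
  · -- singleton soliton
    rw [postP_sing hs] at hb3
    refine ⟨j, j, le_refl j, le_refl j, ?_, ?_⟩
    · rw [← hb3]
      exact h.sing_run 0 hb1 hb2 hs
    · intro t
      refine ⟨((sPos σ k + t : ℕ) : ℤ), ?_, ?_⟩
      · rw [h.BBt_eq t]
        have hz : ((sPos σ k + t : ℕ) : ℤ) + (j - j) = ((sPos σ k + t : ℕ) : ℤ) := by ring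
        rw [hz]
        exact h.sing_run t hb1 hb2 hs
      · intro i hi1 hi2
        have hi0 : i = 0 := by omega
        rw [hi0, add_zero, add_zero, h.BBt_eq t, h.val_sing t hb1 hb2 hs, ← hkdef]
  · -- big-run soliton
    have hb := not_sing_iff.mp hs
    rw [postP_big hb] at hb3
    have hrk1 := Nrk_pos hb1 hb
    have hrkL := Nrk_mono (σ := σ) hb2
    refine ⟨((n + 1 + 0 * Nrk σ n : ℕ) : ℤ), ((n + Nrk σ n + 0 * Nrk σ n : ℕ) : ℤ),
      by omega, by omega, ?_, ?_⟩
    · exact h.big_run hn1 0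
    · intro t
      refine ⟨((n + 1 + t * Nrk σ n : ℕ) : ℤ), ?_, ?_⟩
      · rw [h.BBt_eq t]
        have hz : ((n + 1 + t * Nrk σ n : ℕ) : ℤ) +
            (((n + Nrk σ n + 0 * Nrk σ n : ℕ) : ℤ) - ((n + 1 + 0 * Nrk σ n : ℕ) : ℤ)) =
            ((n + Nrk σ n + t * Nrk σ n : ℕ) : ℤ) := by omega
        rw [hz]
        exact h.big_run hn1 t
      · intro i hi1 hi2
        rw [h.BBt_eq t]
        set r := i.toNat + 1 with hrdef
        obtain ⟨v, hv1, hv2, hvb, hvr⟩ := Nrk_surj (σ := σ) (m := n) (r := r)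
          (by omega) (by omega)
        have hp1 : ((n + 1 + t * Nrk σ n : ℕ) : ℤ) + i = ((n + Nrk σ v + t * Nrk σ n : ℕ) : ℤ) := by
          omega
        have hp2 : ((n + 1 + 0 * Nrk σ n : ℕ) : ℤ) + i = ((n + Nrk σ v + 0 * Nrk σ n : ℕ) : ℤ) := by
          omega
        rw [hp1, hp2, h.val_big t hv1 hv2 hvb, h.val_big 0 hv1 hv2 hvb]

end GoodInv

/-- The one-line involution on `{1,…,n}` determined by `w`. -/
def sigmaOf (n : ℕ) (w : Equiv.Perm (Fin n)) : ℕ → ℕ := fun k =>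
  if h : 1 ≤ k ∧ k ≤ n then ((w ⟨k - 1, by omega⟩ : Fin n) : ℕ) + 1 else 0

lemma sigmaOf_good {n : ℕ} (w : Equiv.Perm (Fin n)) (hinv : w * w = 1)
    (hnc : Noncrossing w) : GoodInv n (sigmaOf n w) := by
  have happ : ∀ x : Fin n, w (w x) = x := by
    intro x
    have := congrArg (fun u : Equiv.Perm (Fin n) => u x) hinv
    simpa [Equiv.Perm.mul_apply] using this
  have hval : ∀ k (h1 : 1 ≤ k) (h2 : k ≤ n),
      sigmaOf n w k = ((w ⟨k - 1, by omega⟩ : Fin n) : ℕ) + 1 := by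
    intro k h1 h2
    unfold sigmaOf
    rw [dif_pos ⟨h1, h2⟩]
  constructor
  · unfold sigmaOf
    rw [dif_neg]
    omega
  · intro k h1 h2
    rw [hval k h1 h2]
    have := (w ⟨k - 1, by omega⟩).isLt
    omega
  · intro k h1 h2
    rw [hval k h1 h2]
    have hlt := (w ⟨k - 1, by omega⟩).isLt
    rw [hval _ (by omega) (by omega)]
    have hfin : (⟨(w ⟨k - 1, by omega⟩ : Fin n) + 1 - 1, by omega⟩ : Fin n) =
        w ⟨k - 1, by omega⟩ := by
      apply Fin.ext
      simp
    rw [hfin, happ]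
    simp
    omega
  · intro a b h1a hab hbsa hsasb hsbn
    have ha2 : a ≤ n := by omega
    have hb2 : b ≤ n := by omega
    have hA : a - 1 < n := by omega
    have hB : b - 1 < n := by omega
    have hsa : sigmaOf n w a = ((w ⟨a - 1, hA⟩ : Fin n) : ℕ) + 1 := by
      unfold sigmaOf
      rw [dif_pos ⟨by omega, ha2⟩]
    have hsb : sigmaOf n w b = ((w ⟨b - 1, hB⟩ : Fin n) : ℕ) + 1 := by
      unfold sigmaOf
      rw [dif_pos ⟨by omega, hb2⟩]
    refine hnc ⟨⟨a - 1, hA⟩, ⟨b - 1, hB⟩, w ⟨a - 1, hA⟩, w ⟨b - 1, hB⟩, ?_, ?_, ?_, rfl, rfl⟩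
    · exact Fin.mk_lt_mk.mpr (by omega)
    · show (b - 1 : ℕ) < ((w ⟨a - 1, hA⟩ : Fin n) : ℕ)
      omega
    · show ((w ⟨a - 1, hA⟩ : Fin n) : ℕ) < ((w ⟨b - 1, hB⟩ : Fin n) : ℕ)
      omega

lemma config_eq {n : ℕ} (w : Equiv.Perm (Fin n)) (h : GoodInv n (sigmaOf n w)) :
    configOfPerm n w = placedC n (fun v => ((sigmaOf n w v : ℕ) : ℤ)) := by
  funext j
  by_cases hj : 1 ≤ j ∧ j ≤ (n : ℤ)
  · have hj1 : 1 ≤ j.toNat := by omega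
    have hj2 : j.toNat ≤ n := by omega
    have hji := h.invol j.toNat hj1 hj2
    have hjm := h.mem j.toNat hj1 hj2
    have hplaced : placedC n (fun v => ((sigmaOf n w v : ℕ) : ℤ)) j = sigmaOf n w j.toNat := by
      refine placedC_eq h.sigma_inj hjm.1 hjm.2 ?_
      show ((sigmaOf n w (sigmaOf n w j.toNat) : ℕ) : ℤ) = j
      rw [hji]
      omega
    rw [hplaced]
    unfold configOfPerm
    rw [dif_pos hj]
    unfold sigmaOf
    rw [dif_pos ⟨hj1, hj2⟩]
  · unfold configOfPerm
    rw [dif_neg hj]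
    refine (placedC_empty ?_).symm
    intro v hv1 hv2 hne
    have := h.mem v hv1 hv2
    have : ((sigmaOf n w v : ℕ) : ℤ) = j := hne
    omega

/-- Every noncrossing involution has steady-state time at most `1`:
`BB^1(w)` is in steady state. -/
theorem noncrossing_involution_steady_state_time_le_one (n : ℕ) (w : Equiv.Perm (Fin n))
    (hinv : w * w = 1) (hnc : Noncrossing w) :
    SteadyState n (BB n 1 (configOfPerm n w)) := by
  have hg := sigmaOf_good w hinv hnc
  have h1 : BB n 1 (configOfPerm n w) =
      placedC n (fun v => (postP n (sigmaOf n w) 0 v : ℤ)) := by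
    rw [config_eq w hg]
    show (BBMove n)^[1] _ = _
    rw [Function.iterate_one]
    exact hg.moveA
  rw [h1]
  exact hg.steady
end

section
/- Let w be an involution in S_n. Then the common shape of the Robinson–Schensted tableaux P(w) and Q(w) (the RS partition of w) is L-shaped, i.e. of the form (s,1,1,...,1), if and only if w is a nested involution. -/
open scoped Classical

namespace RSAux
open List

theorem rowInsert_none {x : ℕ} {r r' : List ℕ} (h : rowInsert x r = (r', none)) :
    r' = r ++ [x] ∧ ∀ y ∈ r, ¬ x < y := by
  induction r generalizing r' with
  | nil => simp [rowInsert] at h; simp [h.symm]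
  | cons y ys ih =>
    by_cases hxy : x < y
    · simp [rowInsert, hxy] at h
    · simp only [rowInsert, if_neg hxy] at h
      obtain ⟨h1, h2⟩ := Prod.mk.injEq _ _ _ _ ▸ h
      obtain ⟨e1, e2⟩ := ih (Prod.ext rfl h2)
      subst h1
      constructor
      · simp [e1]
      · intro z hz
        rcases mem_cons.1 hz with rfl | hz
        · exact hxy
        · exact e2 z hz

theorem rowInsert_some {x y : ℕ} {r r' : List ℕ} (h : rowInsert x r = (r', some y)) :
    ∃ r₁ r₂, r = r₁ ++ y :: r₂ ∧ r' = r₁ ++ x :: r₂ ∧ x < y ∧ ∀ z ∈ r₁, ¬ x < z := by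
  induction r generalizing r' with
  | nil => simp [rowInsert] at h
  | cons a as ih =>
    by_cases hxa : x < a
    · simp only [rowInsert, if_pos hxa, Prod.mk.injEq, Option.some.injEq] at h
      obtain ⟨rfl, rfl⟩ := h
      exact ⟨[], as, by simp, by simp, hxa, by simp⟩
    · simp only [rowInsert, if_neg hxa, Prod.mk.injEq] at h
      obtain ⟨h1, h2⟩ := h
      obtain ⟨r₁, r₂, e1, e2, e3, e4⟩ := ih (Prod.ext rfl h2)
      refine ⟨a :: r₁, r₂, by simp [e1], by simp [← h1, e2], e3, ?_⟩
      intro z hz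
      rcases mem_cons.1 hz with rfl | hz
      · exact hxa
      · exact e4 z hz

/-- One step of the first-row process: inserts `x` into the first row, recording the
bumped element if any. -/
def step (s : List ℕ × List ℕ) (x : ℕ) : List ℕ × List ℕ :=
  ((rowInsert x s.1).1, s.2 ++ (rowInsert x s.1).2.toList)

/-- First row and bumped word of a word. -/
def RB (l : List ℕ) : List ℕ × List ℕ := l.foldl step ([], [])

theorem RB_append (l : List ℕ) (x : ℕ) : RB (l ++ [x]) = step (RB l) x := by
  simp [RB, foldl_append]

/-- leftmost rule packaged -/
theorem bump_le {x y : ℕ} {r r' : List ℕ} (hr : r.IsChain (· < ·))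
    (h : rowInsert x r = (r', some y)) : ∀ z ∈ r, z < y → z ≤ x := by
  obtain ⟨r₁, r₂, e1, e2, e3, e4⟩ := rowInsert_some h
  intro z hz hzy
  subst e1
  rcases mem_append.1 hz with hz | hz
  · exact Nat.not_lt.1 (e4 z hz)
  · rcases mem_cons.1 hz with rfl | hz
    · omega
    · have hp := isChain_iff_pairwise.1 hr
      have hyz : y < z :=
        (List.pairwise_cons.1 ((pairwise_append.1 hp).2.1)).1 z hz
      omega

end RSAux

namespace RSAux
open List

theorem chain'_replace {x y : ℕ} {r₁ r₂ : List ℕ} (hr : (r₁ ++ y :: r₂).IsChain (· < ·))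
    (hxy : x < y) (hx1 : ∀ z ∈ r₁, ¬ x < z) (hxnot : x ∉ r₁) :
    (r₁ ++ x :: r₂).IsChain (· < ·) := by
  have hp := isChain_iff_pairwise.1 hr
  refine isChain_iff_pairwise.2 ?_
  rw [pairwise_append] at hp ⊢
  obtain ⟨h1, h2, h3⟩ := hp
  rw [pairwise_cons] at h2 ⊢
  refine ⟨h1, ⟨fun z hz => lt_trans hxy (h2.1 z hz), h2.2⟩, ?_⟩
  intro a ha b hb
  rcases mem_cons.1 hb with rfl | hb
  · have := hx1 a ha
    have : a ≠ b := fun h => hxnot (h ▸ ha)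
    omega
  · exact h3 a ha b (mem_cons_of_mem _ hb)

theorem basic (l : List ℕ) (hl : l.Nodup) :
    ((RB l).1).IsChain (· < ·) ∧ (∀ z ∈ (RB l).1, z ∈ l) ∧ (∀ z ∈ (RB l).2, z ∈ l)
      ∧ ((RB l).1).length + ((RB l).2).length = l.length ∧ (l ≠ [] → (RB l).1 ≠ []) := by
  induction l using List.reverseRecOn with
  | nil => simp [RB]
  | append_singleton l x ih =>
    have hl' : l.Nodup := (List.nodup_append.1 hl).1
    have hxl : x ∉ l := by
      intro hx
      have := (List.nodup_append.1 hl).2.2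
      exact this x hx x (by simp) rfl
    obtain ⟨ic, im, ibm, icount, _⟩ := ih hl'
    rw [RB_append]
    rcases h : rowInsert x (RB l).1 with ⟨r', o⟩
    cases o with
    | none =>
      obtain ⟨e1, _⟩ := rowInsert_none h
      subst e1
      refine ⟨?_, ?_, ?_, ?_, ?_⟩
      · simp only [step, h]
        rw [List.isChain_append]
        refine ⟨ic, by simp, ?_⟩
        intro a ha b hb
        simp at hb; subst hb
        have ha' := List.mem_getLast?_eq_getLast ha
        obtain ⟨hne, hget⟩ := ha'
        have hmem : a ∈ (RB l).1 := hget ▸ List.getLast_mem hne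
        have := (rowInsert_none h).2 a hmem
        have : a ≠ x := fun hh => hxl (hh ▸ im a hmem)
        omega
      · simp only [step, h]
        intro z hz
        rcases mem_append.1 hz with hz | hz
        · exact mem_append_left _ (im z hz)
        · simp at hz; subst hz; simp
      · simp only [step, h]
        intro z hz
        simp at hz
        exact mem_append_left _ (ibm z hz)
      · simp only [step, h]
        simp; omega
      · intro _
        simp only [step, h]
        simp
    | some y =>
      obtain ⟨r₁, r₂, e1, e2, e3, e4⟩ := rowInsert_some h
      subst e2
      have hxr1 : x ∉ r₁ := fun hh => hxl (im x (e1 ▸ mem_append_left _ hh))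
      refine ⟨?_, ?_, ?_, ?_, ?_⟩
      · simp only [step, h]
        exact chain'_replace (e1 ▸ ic) e3 e4 hxr1
      · simp only [step, h]
        intro z hz
        rcases mem_append.1 hz with hz | hz
        · exact mem_append_left _ (im z (e1 ▸ mem_append_left _ hz))
        · rcases mem_cons.1 hz with rfl | hz
          · simp
          · exact mem_append_left _ (im z (e1 ▸ mem_append_right _ (mem_cons_of_mem _ hz)))
      · simp only [step, h]
        intro u hu
        rcases mem_append.1 hu with hu | hu
        · exact mem_append_left _ (ibm u hu)
        · simp only [Option.toList_some, mem_singleton] at hu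
          subst hu
          exact mem_append_left _ (im u (e1 ▸ mem_append_right _ (by simp)))
      · simp only [step, h]
        rw [e1] at icount
        simp only [length_append, length_cons, Option.toList_some, length_singleton] at icount ⊢
        omega
      · intro _
        simp only [step, h]
        simp

end RSAux

namespace RSAux
open List

theorem RSpair_fst (ps : List (ℕ × ℕ)) : ∀ (P Q : List (List ℕ)),
    (ps.foldl (fun PQ ix =>
      let P' := insertT PQ.1 ix.2
      (P', addToRow PQ.2 (growRow PQ.1 P') (ix.1 + 1))) (P, Q)).1
    = ps.foldl (fun T p => insertT T p.2) P := by
  induction ps with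
  | nil => intro P Q; rfl
  | cons p ps ih => intro P Q; exact ih _ _

theorem RSP_eq_foldl (l : List ℕ) : RSP l = l.foldl insertT [] := by
  rw [RSP, RSpair, RSpair_fst]
  rw [foldl_map (g := insertT) (f := Prod.snd) (l := ((List.range l.length).zip l)) (init := ([] : List (List ℕ))) |>.symm
    ]
  rw [List.map_snd_zip (by simp)]

theorem lemmaA (l : List ℕ) (hne : l ≠ []) :
    l.foldl insertT [] = (RB l).1 :: ((RB l).2).foldl insertT [] := by
  induction l using List.reverseRecOn with
  | nil => exact absurd rfl hne
  | append_singleton l x ih =>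
    rcases eq_or_ne l [] with rfl | hl
    · simp only [nil_append, foldl_cons, foldl_nil]
      have : RB [x] = ([x], []) := by simp [RB, step, rowInsert]
      rw [this]
      rfl
    · rw [foldl_append, foldl_cons, foldl_nil, ih hl, RB_append]
      rcases h : rowInsert x (RB l).1 with ⟨r', o⟩
      cases o with
      | none =>
        simp only [step, h, Option.toList_none, append_nil]
        rw [insertT]
        rw [h]
      | some y =>
        simp only [step, h, Option.toList_some]
        rw [insertT]
        rw [h]
        simp only [foldl_append, foldl_cons, foldl_nil]

theorem insertT_col {c : List ℕ} (hc : c.IsChain (· < ·)) {x : ℕ}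
    (hx : ∀ h ∈ c.head?, x < h) :
    insertT (c.map fun a => [a]) x = (x :: c).map fun a => [a] := by
  induction c generalizing x with
  | nil => rfl
  | cons a as ih =>
    have hxa : x < a := hx a rfl
    simp only [map_cons]
    rw [insertT]
    have : rowInsert x [a] = ([x], some a) := by simp [rowInsert, hxa]
    rw [this]
    show ([x] :: insertT (map (fun a => [a]) as) a) = _
    rw [ih hc.tail]
    · rfl
    · intro h hh
      rcases as with _ | ⟨b, bs⟩
      · simp at hh
      · simp at hh
        subst hh
        exact (isChain_cons_cons.1 hc).1

theorem col_of_dec (v : List ℕ) (h : v.IsChain (· > ·)) :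
    v.foldl insertT [] = (v.reverse).map fun a => [a] := by
  induction v using List.reverseRecOn with
  | nil => rfl
  | append_singleton v x ih =>
    rw [isChain_append] at h
    obtain ⟨h1, _, h3⟩ := h
    rw [foldl_append, foldl_cons, foldl_nil, ih h1, insertT_col, reverse_append]
    · rfl
    · exact isChain_reverse.2 (by simpa using h1)
    · intro a ha
      rw [head?_reverse] at ha
      exact h3 a ha x rfl

theorem insertT_len_mono (T : List (List ℕ)) (x : ℕ) :
    T.length ≤ (insertT T x).length ∧
      ∀ j, (T.getD j []).length ≤ ((insertT T x).getD j []).length := by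
  induction T generalizing x with
  | nil =>
    constructor
    · simp [insertT]
    · intro j; rcases j with _ | j <;> simp [insertT]
  | cons r rest ih =>
    rcases h : rowInsert x r with ⟨r', o⟩
    have hlen : r.length ≤ r'.length := by
      cases o with
      | none => obtain ⟨e, _⟩ := rowInsert_none h; simp [e]
      | some y =>
        obtain ⟨r₁, r₂, e1, e2, _, _⟩ := rowInsert_some h
        simp [e1, e2]
    cases o with
    | none =>
      rw [insertT, h]
      constructor
      · simp
      · intro j; rcases j with _ | j <;> simp [hlen]
    | some y =>
      rw [insertT, h]
      constructor
      · simpa using le_trans (ih y).1 (by simp)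
      · intro j
        rcases j with _ | j
        · simpa using hlen
        · simpa using (ih y).2 j

theorem rows_nonempty (v : List ℕ) : ∀ r ∈ v.foldl insertT [], r ≠ [] := by
  suffices h : ∀ (T : List (List ℕ)), (∀ r ∈ T, r ≠ []) → ∀ r ∈ v.foldl insertT T, r ≠ [] by
    exact h [] (by simp)
  induction v with
  | nil => intro T hT; simpa using hT
  | cons x xs ih =>
    intro T hT
    rw [foldl_cons]
    refine ih _ ?_
    clear ih
    induction T generalizing x with
    | nil => simp [insertT]
    | cons r rest ihT =>
      rcases h : rowInsert x r with ⟨r', o⟩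
      have hr' : r' ≠ [] := by
        cases o with
        | none => obtain ⟨e, _⟩ := rowInsert_none h; simp [e]
        | some y =>
          obtain ⟨r₁, r₂, e1, e2, _, _⟩ := rowInsert_some h
          simp [e2]
      cases o with
      | none =>
        rw [insertT, h]
        intro s hs
        rcases mem_cons.1 hs with rfl | hs
        · exact hr'
        · exact hT s (mem_cons_of_mem _ hs)
      | some y =>
        rw [insertT, h]
        intro s hs
        rcases mem_cons.1 hs with rfl | hs
        · exact hr'
        · exact ihT y (fun t ht => hT t (mem_cons_of_mem _ ht)) s hs

theorem dec_of_col (v : List ℕ) (h : ∃ k, (v.foldl insertT []).map length = replicate k 1) :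
    v.IsChain (· > ·) := by
  induction v using List.reverseRecOn with
  | nil => simp
  | append_singleton v x ih =>
    obtain ⟨k, hk⟩ := h
    rw [foldl_append, foldl_cons, foldl_nil] at hk
    set T := v.foldl insertT [] with hT
    have hTall : ∀ j, j < T.length → (T.getD j []).length = 1 := by
      intro j hj
      have h1 : (T.getD j []).length ≤ ((insertT T x).getD j []).length :=
        (insertT_len_mono T x).2 j
      have hj' : j < (insertT T x).length := lt_of_lt_of_le hj (insertT_len_mono T x).1
      have h2 : ((insertT T x).getD j []).length = 1 := by
        have : ((insertT T x).map length).getD j 0 = 1 := by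
          rw [hk]
          rw [getD_eq_getElem _ _ (by simpa [hk] using (by rwa [length_map] : j < ((insertT T x).map length).length))]
          simp
        have hlen : j < ((insertT T x).map length).length := by rwa [length_map]
        rw [getD_eq_getElem _ _ hlen, getElem_map] at this
        rwa [getD_eq_getElem _ _ hj']
      have h3 : (T.getD j []).length ≥ 1 := by
        have hmem : T.getD j [] ∈ T := by
          rw [getD_eq_getElem _ _ hj]
          exact getElem_mem _
        have := rows_nonempty v _ hmem
        exact length_pos_iff.2 this
      omega
    have hvdec : v.IsChain (· > ·) := by
      refine ih ⟨T.length, ?_⟩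
      refine List.ext_getElem (by simp) ?_
      intro j h1 h2
      have := hTall j (by simpa using h1)
      simp only [getElem_map, getElem_replicate]
      rw [getD_eq_getElem _ _ (by simpa using h1)] at this
      simpa using this
    rcases eq_or_ne v [] with rfl | hv
    · simp
    · rw [isChain_append]
      refine ⟨hvdec, by simp, ?_⟩
      intro a ha b hb
      simp only [head?_cons, Option.mem_def, Option.some.injEq] at hb
      subst hb
      -- a is the last of v; T is the column of v; show b < a i.e. x < head of col
      have hcol : T = (v.reverse).map fun c => [c] := col_of_dec v hvdec
      have hne : v.reverse ≠ [] := by simpa using hv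
      obtain ⟨hd, tl, hrev⟩ := exists_cons_of_ne_nil hne
      have hhd : hd = v.getLast (by simpa using hv) := by
        have h5 := head?_reverse (l := v)
        rw [hrev] at h5
        simp only [head?_cons] at h5
        rw [List.getLast?_eq_getLast (by simpa using hv)] at h5
        simpa using h5
      by_contra hlt
      push_neg at hlt
      -- then rowInsert x [hd] = ([hd, x], none), first row has length 2
      have ha' : a = v.getLast (by simpa using hv) := by
        rw [List.getLast?_eq_getLast (by simpa using hv)] at ha
        simpa using ha.symm
      have hxhd : ¬ x < hd := by rw [hhd, ← ha']; omega
      have hrow : rowInsert x [hd] = ([hd, x], none) := by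
        simp [rowInsert, hxhd]
      have : insertT T x = [hd, x] :: tl.map (fun c => [c]) := by
        rw [hcol, hrev, map_cons, insertT, hrow]
      rw [this] at hk
      have : (2 : ℕ) = 1 := by
        have hk0 : ([hd,x] :: tl.map (fun c => [c])).map length = replicate k 1 := hk
        rcases k with _ | k
        · simp at hk0
        · simpa using congrArg (fun L => L.getD 0 0) hk0
      omega

theorem hook_iff_Bdec (l : List ℕ) (hne : l ≠ []) :
    (∃ s k, (RSP l).map length = s :: replicate k 1) ↔ ((RB l).2).IsChain (· > ·) := by
  rw [RSP_eq_foldl, lemmaA l hne]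
  constructor
  · rintro ⟨s, k, hk⟩
    simp only [map_cons, cons.injEq] at hk
    exact dec_of_col _ ⟨k, hk.2⟩
  · intro hB
    refine ⟨((RB l).1).length, ((RB l).2).length, ?_⟩
    rw [col_of_dec _ hB]
    rw [map_cons, map_map]
    refine congrArg₂ _ rfl ?_
    refine List.eq_replicate_iff.2 ⟨by simp, ?_⟩
    intro b hb
    simp at hb
    obtain ⟨a, _, hb⟩ := hb
    omega

end RSAux

namespace RSAux
open List

theorem inv1 (l : List ℕ) (hl : l.Nodup) (hB : ((RB l).2).IsChain (· > ·))
    (hne : (RB l).2 ≠ []) :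
    ∃ d v, (d ++ [v]) <+ l ∧ (d ++ [v]).IsChain (· > ·) ∧ d.length = ((RB l).2).length ∧
      (∀ bl ∈ ((RB l).2).getLast?, ∀ dl ∈ d.getLast?, bl ≤ dl) ∧
      (∀ z ∈ (RB l).1, ∀ bl ∈ ((RB l).2).getLast?, z < bl → z ≤ v ∨ (d ++ [z]) <+ l) := by
  induction l using List.reverseRecOn with
  | nil => simp [RB] at hne
  | append_singleton l x ih =>
    have hl' : l.Nodup := (List.nodup_append.1 hl).1
    have hxl : x ∉ l := fun hx => (List.nodup_append.1 hl).2.2 x hx x (by simp) rfl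
    obtain ⟨ic, im, ibm, icount, irne⟩ := basic l hl'
    rw [RB_append] at hB hne ⊢
    rcases h : rowInsert x (RB l).1 with ⟨r', o⟩
    cases o with
    | none =>
      simp only [step, h, Option.toList_none, append_nil] at hB hne ⊢
      obtain ⟨d, v, hdv, hch, hlen, hval, hCL⟩ := ih hl' hB hne
      obtain ⟨e1, e2⟩ := rowInsert_none h
      refine ⟨d, v, hdv.trans (sublist_append_left _ _), hch, hlen, hval, ?_⟩
      intro z hz bl hbl hzbl
      rw [e1] at hz
      rcases mem_append.1 hz with hz | hz
      · rcases hCL z hz bl hbl hzbl with h' | h'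
        · exact Or.inl h'
        · exact Or.inr (h'.trans (sublist_append_left _ _))
      · simp only [mem_singleton] at hz
        subst hz
        refine Or.inr ?_
        have hd : d <+ l := (sublist_append_left d [v]).trans hdv
        exact hd.append (Sublist.refl [z])
    | some y =>
      simp only [step, h, Option.toList_some] at hB hne ⊢
      obtain ⟨r₁, r₂, e1, e2, e3, e4⟩ := rowInsert_some h
      subst e2
      have hy_mem_row : y ∈ (RB l).1 := e1 ▸ mem_append_right _ (by simp)
      have hy_mem : y ∈ l := im y hy_mem_row
      -- the leftmost rule for the new row
      have hCL' : ∀ z ∈ r₁ ++ x :: r₂, z < y → z ≤ x := by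
        intro z hz hzy
        rcases mem_append.1 hz with hz | hz
        · exact Nat.not_lt.1 (e4 z hz)
        · rcases mem_cons.1 hz with rfl | hz
          · exact le_rfl
          · have hp := isChain_iff_pairwise.1 (e1 ▸ ic)
            have : y < z := (List.pairwise_cons.1 (pairwise_append.1 hp).2.1).1 z hz
            omega
      have hlast : (((RB l).2) ++ [y]).getLast? = some y := by
        simp
      rcases eq_or_ne (RB l).2 [] with hBe | hBne
      · -- first bump ever
        refine ⟨[y], x, ?_, ?_, by simp [hBe], ?_, ?_⟩
        · have : [y] <+ l := singleton_sublist.2 hy_mem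
          exact this.append (Sublist.refl [x])
        · exact isChain_pair.2 e3
        · rw [hlast]
          intro bl hbl dl hdl
          simp at hbl hdl
          omega
        · intro z hz bl hbl hzbl
          rw [hlast] at hbl
          simp at hbl
          subst hbl
          exact Or.inl (hCL' z hz hzbl)
      · -- previous bumps exist
        rw [isChain_append] at hB
        obtain ⟨hBold, _, hBy⟩ := hB
        have hylt : ∀ bl ∈ ((RB l).2).getLast?, y < bl := by
          intro bl hbl
          exact hBy bl hbl y rfl
        obtain ⟨d, v, hdv, hch, hlen, hval, hCL⟩ := ih hl' hBold hBne
        obtain ⟨blv, hblv⟩ : ∃ blv, ((RB l).2).getLast? = some blv :=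
          ⟨_, List.getLast?_eq_getLast hBne⟩
        have hyblv : y < blv := hylt blv hblv
        have hdne : d ≠ [] := by
          intro hd0
          rw [hd0] at hlen
          exact hBne (by simpa using hlen.symm)
        obtain ⟨dlv, hdlv⟩ : ∃ dlv, d.getLast? = some dlv :=
          ⟨_, List.getLast?_eq_getLast hdne⟩
        have hblv_dlv : blv ≤ dlv := hval blv hblv dlv hdlv
        have hchd : d.IsChain (· > ·) := (isChain_append.1 hch).1
        rcases hCL y hy_mem_row blv hblv hyblv with hyv | hsub
        · -- y ≤ v : new d = d ++ [v]
          refine ⟨d ++ [v], x, hdv.append (Sublist.refl [x]), ?_, by simp [hlen], ?_, ?_⟩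
          · rw [isChain_append]
            refine ⟨hch, by simp, ?_⟩
            intro a ha b hb
            simp only [head?_cons, Option.mem_def, Option.some.injEq] at hb
            subst hb
            rw [getLast?_concat] at ha
            simp at ha
            subst ha
            omega
          · rw [hlast, getLast?_concat]
            intro bl hbl dl hdl
            simp at hbl hdl
            omega
          · intro z hz bl hbl hzbl
            rw [hlast] at hbl
            simp at hbl
            subst hbl
            exact Or.inl (hCL' z hz hzbl)
        · -- d ++ [y] <+ l : new d = d ++ [y]
          refine ⟨d ++ [y], x, hsub.append (Sublist.refl [x]), ?_, by simp [hlen], ?_, ?_⟩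
          · rw [isChain_append]
            refine ⟨?_, by simp, ?_⟩
            · rw [isChain_append]
              refine ⟨hchd, by simp, ?_⟩
              intro a ha b hb
              simp only [head?_cons, Option.mem_def, Option.some.injEq] at hb
              subst hb
              rw [hdlv] at ha
              simp at ha
              subst ha
              omega
            · intro a ha b hb
              simp only [head?_cons, Option.mem_def, Option.some.injEq] at hb
              subst hb
              rw [getLast?_concat] at ha
              simp at ha
              subst ha
              omega
          · rw [hlast, getLast?_concat]
            intro bl hbl dl hdl
            simp at hbl hdl
            omega
          · intro z hz bl hbl hzbl
            rw [hlast] at hbl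
            simp at hbl
            subst hbl
            exact Or.inl (hCL' z hz hzbl)

end RSAux

namespace RSAux
open List

theorem inv2 (l : List ℕ) (hl : l.Nodup) :
    ∀ d, d <+ l → d.IsChain (· > ·) →
    ∃ u, u <+ (RB l).2 ∧ u.IsChain (· > ·) ∧
      ((d = [] ∧ u = []) ∨
       (∃ dl ∈ d.getLast?, dl ∈ (RB l).1 ∧ d.length ≤ u.length + 1 ∧
         (u = [] ∨ ∃ ul ∈ u.getLast?, dl < ul)) ∨
       (∃ dl ∈ d.getLast?, ∃ ul ∈ u.getLast?, d.length ≤ u.length ∧ dl ≤ ul)) := by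
  induction l using List.reverseRecOn with
  | nil =>
    intro d hd _
    rw [sublist_nil] at hd
    exact ⟨[], by simp [RB], by simp, Or.inl ⟨hd, rfl⟩⟩
  | append_singleton l x ih =>
    have hl' : l.Nodup := (List.nodup_append.1 hl).1
    have hxl : x ∉ l := fun hx => (List.nodup_append.1 hl).2.2 x hx x (by simp) rfl
    obtain ⟨ic, im, ibm, icount, irne⟩ := basic l hl'
    intro d hd hdc
    rw [RB_append]
    obtain ⟨d₁, d₂, rfl, hd₁, hd₂⟩ := sublist_append_iff.1 hd
    have hd₂' : d₂ = [] ∨ d₂ = [x] := sublist_singleton.1 hd₂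
    rcases h : rowInsert x (RB l).1 with ⟨r', o⟩
    -- facts about the new row
    have hx_new : x ∈ (step (RB l) x).1 := by
      cases o with
      | none =>
        obtain ⟨e1, _⟩ := rowInsert_none h
        simp [step, h, e1]
      | some y =>
        obtain ⟨r₁, r₂, e1, e2, _, _⟩ := rowInsert_some h
        simp [step, h, e2]
    rcases hd₂' with rfl | rfl
    · -- d = d₁ is an old sublist
      rw [append_nil] at hdc ⊢
      obtain ⟨u, hu, huc, hcase⟩ := ih hl' d₁ hd₁ hdc
      cases o with
      | none =>
        obtain ⟨e1, _⟩ := rowInsert_none h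
        simp only [step, h, Option.toList_none, append_nil]
        refine ⟨u, hu, huc, ?_⟩
        rcases hcase with hc | hc | hc
        · exact Or.inl hc
        · obtain ⟨dl, hdl, hmem, hle, hor⟩ := hc
          exact Or.inr (Or.inl ⟨dl, hdl, e1 ▸ mem_append_left _ hmem, hle, hor⟩)
        · exact Or.inr (Or.inr hc)
      | some y =>
        obtain ⟨r₁, r₂, e1, e2, e3, e4⟩ := rowInsert_some h
        subst e2
        simp only [step, h, Option.toList_some]
        rcases hcase with hc | hc | hc
        · exact ⟨u, hu.trans (sublist_append_left _ _), huc, Or.inl hc⟩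
        · obtain ⟨dl, hdl, hmem, hle, hor⟩ := hc
          rcases eq_or_ne dl y with rfl | hdly
          · -- the last element of d just got bumped
            refine ⟨u ++ [dl], hu.append (Sublist.refl _), ?_, ?_⟩
            · rw [isChain_append]
              refine ⟨huc, by simp, ?_⟩
              intro a ha b hb
              simp only [head?_cons, Option.mem_def, Option.some.injEq] at hb
              subst hb
              rcases hor with rfl | ⟨ul, hul, hlt⟩
              · simp at ha
              · rw [hul] at ha; simp at ha; omega
            · refine Or.inr (Or.inr ⟨dl, hdl, dl, by simp, by simp; omega, le_rfl⟩)
          · -- last element of d survives in the row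
            have hmem' : dl ∈ r₁ ++ x :: r₂ := by
              rw [e1] at hmem
              rcases mem_append.1 hmem with hm | hm
              · exact mem_append_left _ hm
              · rcases mem_cons.1 hm with rfl | hm
                · exact absurd rfl hdly
                · exact mem_append_right _ (mem_cons_of_mem _ hm)
            exact ⟨u, hu.trans (sublist_append_left _ _), huc,
              Or.inr (Or.inl ⟨dl, hdl, hmem', hle, hor⟩)⟩
        · obtain ⟨dl, hdl, ul, hul, hle, hor⟩ := hc
          exact ⟨u, hu.trans (sublist_append_left _ _), huc,
            Or.inr (Or.inr ⟨dl, hdl, ul, hul, hle, hor⟩)⟩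
    · -- d = d₁ ++ [x]
      rcases eq_or_ne d₁ [] with rfl | hd₁ne
      · -- d = [x]
        refine ⟨[], nil_sublist _, by simp, Or.inr (Or.inl ⟨x, by simp, hx_new, by simp, Or.inl rfl⟩)⟩
      · have hchain := isChain_append.1 hdc
        obtain ⟨hd₁c, _, hlastx⟩ := hchain
        obtain ⟨dl₁, hdl₁⟩ : ∃ dl₁, d₁.getLast? = some dl₁ :=
          ⟨_, List.getLast?_eq_getLast hd₁ne⟩
        have hdl₁x : x < dl₁ := hlastx dl₁ hdl₁ x rfl
        have hdl₁d : x < dl₁ := hdl₁x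
        obtain ⟨u, hu, huc, hcase⟩ := ih hl' d₁ hd₁ hd₁c
        rcases hcase with hc | hc | hc
        · exact absurd hc.1 hd₁ne
        · -- D2 for d₁ : a bump must occur now
          obtain ⟨dl, hdl, hmem, hle, hor⟩ := hc
          rw [hdl₁] at hdl
          simp only [Option.mem_def, Option.some.injEq] at hdl
          subst hdl
          cases o with
          | none =>
            obtain ⟨_, hnone⟩ := rowInsert_none h
            exact absurd hdl₁x (hnone dl₁ hmem)
          | some y =>
            obtain ⟨r₁, r₂, e1, e2, e3, e4⟩ := rowInsert_some h
            subst e2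
            simp only [step, h, Option.toList_some]
            have hy_le : y ≤ dl₁ := by
              rw [e1] at hmem
              rcases mem_append.1 hmem with hm | hm
              · exact absurd hdl₁x (e4 dl₁ hm)
              · rcases mem_cons.1 hm with rfl | hm
                · exact le_rfl
                · have hp := isChain_iff_pairwise.1 (e1 ▸ ic)
                  have : y < dl₁ := (List.pairwise_cons.1 (pairwise_append.1 hp).2.1).1 dl₁ hm
                  omega
            refine ⟨u ++ [y], hu.append (Sublist.refl _), ?_, ?_⟩
            · rw [isChain_append]
              refine ⟨huc, by simp, ?_⟩
              intro a ha b hb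
              simp only [head?_cons, Option.mem_def, Option.some.injEq] at hb
              subst hb
              rcases hor with rfl | ⟨ul, hul, hlt⟩
              · simp at ha
              · rw [hul] at ha; simp at ha; omega
            · refine Or.inr (Or.inl ⟨x, by simp, ?_, ?_, ?_⟩)
              · simp
              · simp only [length_append, length_singleton]
                omega
              · refine Or.inr ⟨y, by simp, e3⟩
        · -- D3 for d₁
          obtain ⟨dl, hdl, ul, hul, hle, hor⟩ := hc
          rw [hdl₁] at hdl
          simp only [Option.mem_def, Option.some.injEq] at hdl
          subst hdl
          have hu' : u <+ (step (RB l) x).2 := by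
            cases o with
            | none => simpa [step, h] using hu
            | some y =>
              simp only [step, h, Option.toList_some]
              exact hu.trans (sublist_append_left _ _)
          refine ⟨u, hu', huc, Or.inr (Or.inl ⟨x, by simp, hx_new, ?_, ?_⟩)⟩
          · simp only [length_append, length_singleton]
            omega
          · refine Or.inr ⟨ul, hul, by omega⟩

end RSAux

namespace RSAux
open List

theorem getD_mem {r : List ℕ} {j : ℕ} (h : j < r.length) : r.getD j 0 ∈ r := by
  rw [getD_eq_getElem _ _ h]
  exact getElem_mem _

theorem getD_app_left (r₁ r₂ : List ℕ) {j : ℕ} (h : j < r₁.length) :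
    (r₁ ++ r₂).getD j 0 = r₁.getD j 0 := by
  induction r₁ generalizing j with
  | nil => simp at h
  | cons b t ihb =>
    rcases j with _ | j
    · rfl
    · simp only [length_cons] at h
      simpa [List.getD] using ihb (by omega)

theorem getD_app_mid (r₁ r₂ : List ℕ) (a : ℕ) :
    (r₁ ++ a :: r₂).getD r₁.length 0 = a := by
  induction r₁ with
  | nil => rfl
  | cons b t ihb => simpa [List.getD] using ihb

theorem getD_app_right (r₁ r₂ : List ℕ) (a : ℕ) {j : ℕ} (h : r₁.length < j) :
    (r₁ ++ a :: r₂).getD j 0 = r₂.getD (j - r₁.length - 1) 0 := by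
  induction r₁ generalizing j with
  | nil =>
    rcases j with _ | j
    · simp at h
    · simp [List.getD]
  | cons b t ihb =>
    rcases j with _ | j
    · simp at h
    · simp only [length_cons] at h
      have := ihb (j := j) (by omega)
      simp only [cons_append, List.getD, getElem?_cons_succ] at this ⊢
      rw [this]
      have harith : j + 1 - (b :: t).length - 1 = j - t.length - 1 := by
        simp only [length_cons]; omega
      rw [harith]

theorem sorted_getD_lt {r : List ℕ} (hr : r.IsChain (· < ·)) {i j : ℕ} (hij : i < j)
    (hj : j < r.length) : r.getD i 0 < r.getD j 0 := by
  have hp := isChain_iff_pairwise.1 hr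
  rw [getD_eq_getElem _ _ (by omega), getD_eq_getElem _ _ hj]
  exact List.pairwise_iff_getElem.1 hp i j (by omega) hj hij

theorem inv3 (l : List ℕ) (hl : l.Nodup) :
    (∀ j, j < ((RB l).1).length → ∃ s, s <+ l ∧ s.IsChain (· < ·) ∧ s.length = j + 1 ∧
        s.getLast? = some (((RB l).1).getD j 0)) ∧
    (∀ s, s <+ l → s.IsChain (· < ·) → s.length ≤ ((RB l).1).length ∧
        ∀ sl ∈ s.getLast?, ((RB l).1).getD (s.length - 1) 0 ≤ sl) := by
  induction l using List.reverseRecOn with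
  | nil =>
    constructor
    · intro j hj
      rw [show RB ([] : List ℕ) = ([], []) from rfl] at hj
      simp at hj
    · intro s hs _
      rw [sublist_nil] at hs
      subst hs
      rw [show RB ([] : List ℕ) = ([], []) from rfl]
      exact ⟨le_rfl, by intro sl hsl; simp at hsl⟩
  | append_singleton l x ih =>
    have hl' : l.Nodup := (List.nodup_append.1 hl).1
    have hxl : x ∉ l := fun hx => (List.nodup_append.1 hl).2.2 x hx x (by simp) rfl
    obtain ⟨ic, im, ibm, icount, irne⟩ := basic l hl'
    obtain ⟨ih1, ih2⟩ := ih hl'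
    rw [RB_append]
    rcases h : rowInsert x (RB l).1 with ⟨r', o⟩
    cases o with
    | none =>
      obtain ⟨e1, e2⟩ := rowInsert_none h
      subst e1
      simp only [step, h]
      have hstrict : ∀ y ∈ (RB l).1, y < x := by
        intro y hy
        have h1 := e2 y hy
        have h2 : y ≠ x := fun hh => hxl (hh ▸ im y hy)
        omega
      constructor
      · intro j hj
        simp only [length_append, length_singleton] at hj
        rcases Nat.lt_or_ge j ((RB l).1).length with hj' | hj'
        · obtain ⟨s, hs1, hs2, hs3, hs4⟩ := ih1 j hj'
          exact ⟨s, hs1.trans (sublist_append_left _ _), hs2, hs3,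
            by rw [getD_app_left _ _ hj']; exact hs4⟩
        · have hj'' : j = ((RB l).1).length := by omega
          subst hj''
          rcases eq_or_ne (RB l).1 [] with hre | hrne
          · refine ⟨[x], ?_, by simp, by simp [hre], ?_⟩
            · exact (nil_sublist l).append (Sublist.refl _)
            · rw [hre]
              simp
          · have hlen : ((RB l).1).length - 1 < ((RB l).1).length := by
              have := length_pos_iff.2 hrne; omega
            obtain ⟨s, hs1, hs2, hs3, hs4⟩ := ih1 _ hlen
            refine ⟨s ++ [x], hs1.append (Sublist.refl _), ?_, ?_, ?_⟩
            · rw [isChain_append]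
              refine ⟨hs2, by simp, ?_⟩
              intro a ha b hb
              simp only [head?_cons, Option.mem_def, Option.some.injEq] at hb
              subst hb
              rw [hs4] at ha
              simp only [Option.mem_def, Option.some.injEq] at ha
              subst ha
              exact hstrict _ (getD_mem hlen)
            · simp [hs3]
              have := length_pos_iff.2 hrne; omega
            · rw [getLast?_concat, getD_app_mid]
      · intro s hs hsc
        obtain ⟨s₁, s₂, rfl, hs₁, hs₂⟩ := sublist_append_iff.1 hs
        rcases sublist_singleton.1 hs₂ with rfl | rfl
        · rw [append_nil] at hsc ⊢
          obtain ⟨hlen, hval⟩ := ih2 s₁ hs₁ hsc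
          constructor
          · simp; omega
          · intro sl hsl
            rw [getD_app_left]
            · exact hval sl hsl
            · have : s₁ ≠ [] := by rintro rfl; simp at hsl
              have := length_pos_iff.2 this
              omega
        · rcases eq_or_ne s₁ [] with rfl | hs₁ne
          · constructor
            · simp
            · intro sl hsl
              simp only [nil_append, getLast?_singleton, Option.mem_def,
                Option.some.injEq] at hsl
              subst hsl
              simp only [nil_append, length_singleton]
              rcases eq_or_ne (RB l).1 [] with hre | hrne
              · rw [hre]; simp
              · rw [getD_app_left _ _ (length_pos_iff.2 hrne)]
                exact le_of_lt (hstrict _ (getD_mem (length_pos_iff.2 hrne)))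
          · have hchain := isChain_append.1 hsc
            obtain ⟨hs₁c, _, hlastx⟩ := hchain
            obtain ⟨sl₁, hsl₁⟩ : ∃ a, s₁.getLast? = some a :=
              ⟨_, List.getLast?_eq_getLast hs₁ne⟩
            have hsl₁x : sl₁ < x := hlastx sl₁ hsl₁ x rfl
            obtain ⟨hlen, hval⟩ := ih2 s₁ hs₁ hs₁c
            have hval₁ := hval sl₁ hsl₁
            constructor
            · simp; omega
            · intro sl hsl
              rw [getLast?_concat] at hsl
              simp only [Option.mem_def, Option.some.injEq] at hsl
              subst hsl
              simp only [length_append, length_singleton, Nat.add_sub_cancel]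
              rcases Nat.lt_or_ge s₁.length ((RB l).1).length with hc | hc
              · rw [getD_app_left _ _ hc]
                exact le_of_lt (hstrict _ (getD_mem hc))
              · have : s₁.length = ((RB l).1).length := by omega
                rw [this, getD_app_mid]
    | some y =>
      obtain ⟨r₁, r₂, e1, e2, e3, e4⟩ := rowInsert_some h
      subst e2
      simp only [step, h]
      have hstrict : ∀ z ∈ r₁, z < x := by
        intro z hz
        have h1 := e4 z hz
        have h2 : z ≠ x := fun hh => hxl (hh ▸ im z (e1 ▸ mem_append_left _ hz))
        omega
      have hrlen : ((RB l).1).length = r₁.length + 1 + r₂.length := by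
        rw [e1]; simp; omega
      have hgetc : ((RB l).1).getD r₁.length 0 = y := by rw [e1, getD_app_mid]
      have hgetc' : (r₁ ++ x :: r₂).getD r₁.length 0 = x := getD_app_mid _ _ _
      have hgetlt : ∀ j, j < r₁.length → ((RB l).1).getD j 0 = r₁.getD j 0 ∧
          (r₁ ++ x :: r₂).getD j 0 = r₁.getD j 0 := by
        intro j hj
        rw [e1]
        exact ⟨getD_app_left _ _ hj, getD_app_left _ _ hj⟩
      have hgetgt : ∀ j, r₁.length < j → ((RB l).1).getD j 0 = (r₁ ++ x :: r₂).getD j 0 := by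
        intro j hj
        rw [e1, getD_app_right _ _ _ hj, getD_app_right _ _ _ hj]
      have hle : ∀ j, j < ((RB l).1).length →
          (r₁ ++ x :: r₂).getD j 0 ≤ ((RB l).1).getD j 0 := by
        intro j hj
        rcases Nat.lt_trichotomy j r₁.length with hj' | rfl | hj'
        · rw [(hgetlt j hj').1, (hgetlt j hj').2]
        · rw [hgetc, hgetc']; omega
        · rw [hgetgt j hj']
      have hlen' : (r₁ ++ x :: r₂).length = ((RB l).1).length := by
        rw [e1]; simp
      constructor
      · intro j hj
        rw [hlen'] at hj
        rcases Nat.lt_trichotomy j r₁.length with hj' | rfl | hj'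
        · obtain ⟨s, hs1, hs2, hs3, hs4⟩ := ih1 j hj
          refine ⟨s, hs1.trans (sublist_append_left _ _), hs2, hs3, ?_⟩
          rw [(hgetlt j hj').2, ← (hgetlt j hj').1]
          exact hs4
        · rcases Nat.eq_zero_or_pos r₁.length with hc0 | hcpos
          · have hr₁ : r₁ = [] := length_eq_zero_iff.1 hc0
            refine ⟨[x], (nil_sublist l).append (Sublist.refl _), by simp, by simp [hr₁], ?_⟩
            rw [hgetc']
            simp
          · obtain ⟨s, hs1, hs2, hs3, hs4⟩ := ih1 (r₁.length - 1) (by omega)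
            refine ⟨s ++ [x], hs1.append (Sublist.refl _), ?_, by simp [hs3]; omega, ?_⟩
            · rw [isChain_append]
              refine ⟨hs2, by simp, ?_⟩
              intro a ha b hb
              simp only [head?_cons, Option.mem_def, Option.some.injEq] at hb
              subst hb
              rw [hs4] at ha
              simp only [Option.mem_def, Option.some.injEq] at ha
              subst ha
              rw [(hgetlt _ (by omega)).1]
              exact hstrict _ (getD_mem (by omega))
            · rw [getLast?_concat, hgetc']
        · obtain ⟨s, hs1, hs2, hs3, hs4⟩ := ih1 j hj
          refine ⟨s, hs1.trans (sublist_append_left _ _), hs2, hs3, ?_⟩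
          rw [← hgetgt j hj']
          exact hs4
      · intro s hs hsc
        obtain ⟨s₁, s₂, rfl, hs₁, hs₂⟩ := sublist_append_iff.1 hs
        rcases sublist_singleton.1 hs₂ with rfl | rfl
        · rw [append_nil] at hsc ⊢
          obtain ⟨hlen, hval⟩ := ih2 s₁ hs₁ hsc
          constructor
          · omega
          · intro sl hsl
            have hne : s₁ ≠ [] := by rintro rfl; simp at hsl
            have hpos := length_pos_iff.2 hne
            exact le_trans (hle _ (by omega)) (hval sl hsl)
        · rcases eq_or_ne s₁ [] with rfl | hs₁ne
          · constructor
            · simp only [nil_append, length_singleton, hlen', hrlen]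
              omega
            · intro sl hsl
              simp only [nil_append, getLast?_singleton, Option.mem_def,
                Option.some.injEq] at hsl
              subst hsl
              simp only [nil_append, length_singleton]
              rcases Nat.eq_zero_or_pos r₁.length with hc0 | hcpos
              · have hr₁ : r₁ = [] := length_eq_zero_iff.1 hc0
                rw [hr₁] at hgetc' ⊢
                simp at hgetc' ⊢
              · rw [(hgetlt 0 hcpos).2]
                exact le_of_lt (hstrict _ (getD_mem hcpos))
          · have hchain := isChain_append.1 hsc
            obtain ⟨hs₁c, _, hlastx⟩ := hchain
            obtain ⟨sl₁, hsl₁⟩ : ∃ a, s₁.getLast? = some a :=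
              ⟨_, List.getLast?_eq_getLast hs₁ne⟩
            have hsl₁x : sl₁ < x := hlastx sl₁ hsl₁ x rfl
            obtain ⟨hlen, hval⟩ := ih2 s₁ hs₁ hs₁c
            have hval₁ := hval sl₁ hsl₁
            have hpos := length_pos_iff.2 hs₁ne
            -- s₁.length ≤ r₁.length
            have hkey : s₁.length ≤ r₁.length := by
              by_contra hgt
              push_neg at hgt
              have h1 : ((RB l).1).getD r₁.length 0 ≤ ((RB l).1).getD (s₁.length - 1) 0 := by
                rcases Nat.lt_or_ge (s₁.length - 1) ((RB l).1).length with hlt | hge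
                · rcases Nat.eq_or_lt_of_le (by omega : r₁.length ≤ s₁.length - 1) with he | hlt2
                  · rw [he]
                  · exact le_of_lt (sorted_getD_lt ic hlt2 hlt)
                · omega
              rw [hgetc] at h1
              omega
            constructor
            · simp only [length_append, length_singleton, hlen', hrlen]
              omega
            · intro sl hsl
              rw [getLast?_concat] at hsl
              simp only [Option.mem_def, Option.some.injEq] at hsl
              subst hsl
              simp only [length_append, length_singleton, Nat.add_sub_cancel]
              rcases Nat.eq_or_lt_of_le hkey with he | hlt
              · rw [he, hgetc']
              · rw [(hgetlt _ hlt).2]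
                exact le_of_lt (hstrict _ (getD_mem hlt))

end RSAux

namespace RSAux
open List

theorem two_mem {α : Type*} {s : List α} {v v' : α} (hv : v ∈ s) (hv' : v' ∈ s)
    (hne : v ≠ v') : [v, v'] <+ s ∨ [v', v] <+ s := by
  induction s with
  | nil => simp at hv
  | cons hd t ih =>
    rcases mem_cons.1 hv with rfl | hvt
    · have hv't : v' ∈ t := by
        rcases mem_cons.1 hv' with rfl | hv't
        · exact absurd rfl hne
        · exact hv't
      exact Or.inl ((singleton_sublist.2 hv't).cons₂ v)
    · rcases mem_cons.1 hv' with rfl | hv't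
      · exact Or.inr ((singleton_sublist.2 hvt).cons₂ v')
      · rcases ih hvt hv't with h' | h'
        · exact Or.inl (h'.cons hd)
        · exact Or.inr (h'.cons hd)

theorem nodup_order {α : Type*} {l : List α} (hl : l.Nodup) {x y : α}
    (h1 : [x, y] <+ l) (h2 : [y, x] <+ l) : False := by
  induction l with
  | nil => simp at h1
  | cons hd t ih =>
    have hht : hd ∉ t := (nodup_cons.1 hl).1
    have hnd : t.Nodup := (nodup_cons.1 hl).2
    cases h1 with
    | cons a h1' =>
      have hy : y ∈ t := h1'.subset (by simp)
      cases h2 with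
      | cons a2 h2' => exact ih hnd h1' h2'
      | cons_cons a2 h2' => exact hht hy
    | cons_cons a h1' =>
      have hy : y ∈ t := h1'.subset (by simp)
      cases h2 with
      | cons a2 h2' => exact hht (h2'.subset (by simp))
      | cons_cons a2 h2' => exact hht hy

theorem sublist_of_subset_pairwise {α : Type*} [LinearOrder α] :
    ∀ {l₂ l₁ : List α}, l₁.Pairwise (· < ·) → l₂.Pairwise (· < ·) →
      (∀ x ∈ l₁, x ∈ l₂) → l₁ <+ l₂ := by
  intro l₂
  induction l₂ with
  | nil =>
    intro l₁ _ _ hsub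
    cases l₁ with
    | nil => simp
    | cons a t => exact absurd (hsub a (by simp)) (by simp)
  | cons b t₂ ih =>
    intro l₁ h1 h2 hsub
    cases l₁ with
    | nil => simp
    | cons a t₁ =>
      rcases eq_or_ne a b with rfl | hab
      · refine Sublist.cons₂ a (ih (pairwise_cons.1 h1).2 (pairwise_cons.1 h2).2 ?_)
        intro z hz
        rcases mem_cons.1 (hsub z (mem_cons_of_mem _ hz)) with rfl | hzt
        · exact absurd ((pairwise_cons.1 h1).1 z hz) (lt_irrefl z)
        · exact hzt
      · refine Sublist.cons b (ih h1 (pairwise_cons.1 h2).2 ?_)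
        intro z hz
        rcases mem_cons.1 (hsub z hz) with rfl | hzt
        · -- z = b ∈ l₁; but b < a impossible
          have hat : a ∈ t₂ := by
            rcases mem_cons.1 (hsub a (by simp)) with rfl | h'
            · exact absurd rfl hab
            · exact h'
          have hba : z < a := (pairwise_cons.1 h2).1 a hat
          rcases mem_cons.1 hz with rfl | hzz
          · exact absurd hba (lt_irrefl _)
          · have : a < z := (pairwise_cons.1 h1).1 z hzz
            exact absurd (lt_trans this hba) (lt_irrefl _)
        · exact hzt

theorem pairwise_sublist_finRange {n : ℕ} {is : List (Fin n)}
    (h : is.Pairwise (· < ·)) : is <+ List.finRange n :=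
  sublist_of_subset_pairwise h (List.pairwise_lt_finRange n) (fun x _ => List.mem_finRange x)

end RSAux

namespace RSAux
open List

variable {n : ℕ}

theorem wordOf_eq_map (w : Equiv.Perm (Fin n)) :
    wordOf n w = (List.finRange n).map (fun i => (w i : ℕ) + 1) := by
  rw [wordOf, List.ofFn_eq_map]

theorem wordOf_length (w : Equiv.Perm (Fin n)) : (wordOf n w).length = n := by
  simp [wordOf]

theorem wordOf_nodup (w : Equiv.Perm (Fin n)) : (wordOf n w).Nodup := by
  rw [wordOf]
  refine List.nodup_ofFn.2 ?_
  intro i j hij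
  simp only [Nat.add_right_cancel_iff] at hij
  exact w.injective (Fin.val_injective hij)

theorem mem_wordOf (w : Equiv.Perm (Fin n)) (i : Fin n) :
    (w i : ℕ) + 1 ∈ wordOf n w := by
  rw [wordOf_eq_map]
  exact List.mem_map.2 ⟨i, List.mem_finRange i, rfl⟩

theorem map_sublist_wordOf (w : Equiv.Perm (Fin n)) {is : List (Fin n)}
    (h : is.Pairwise (· < ·)) :
    is.map (fun i => (w i : ℕ) + 1) <+ wordOf n w := by
  rw [wordOf_eq_map]
  exact (pairwise_sublist_finRange h).map _

theorem pair_sublist_wordOf (w : Equiv.Perm (Fin n)) {i j : Fin n} (hij : i < j) :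
    [(w i : ℕ) + 1, (w j : ℕ) + 1] <+ wordOf n w := by
  have := map_sublist_wordOf w (is := [i, j]) (by simp [hij])
  simpa using this

theorem finsetSeq (w : Equiv.Perm (Fin n)) (S : Finset (Fin n)) (rel : ℕ → ℕ → Prop)
    (hmono : ∀ i ∈ S, ∀ j ∈ S, i < j → rel ((w i : ℕ) + 1) ((w j : ℕ) + 1)) :
    ∃ s : List ℕ, s <+ wordOf n w ∧ s.Pairwise rel ∧ s.length = S.card := by
  refine ⟨(S.sort (· ≤ ·)).map (fun i => (w i : ℕ) + 1), ?_, ?_, ?_⟩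
  · exact map_sublist_wordOf w (Finset.sortedLT_sort S).pairwise
  · rw [List.pairwise_map]
    refine List.Pairwise.imp_of_mem ?_ (Finset.sortedLT_sort S).pairwise
    intro a b ha hb hab
    exact hmono a ((Finset.mem_sort _).1 ha) b ((Finset.mem_sort _).1 hb) hab
  · rw [List.length_map, Finset.length_sort]

theorem not_both_inc {l I : List ℕ} (hl : l.Nodup) (hI : I <+ l) (hIc : I.IsChain (· < ·))
    {u v : ℕ} (huv : [u, v] <+ l) (hvu : v < u) (hu : u ∈ I) (hv : v ∈ I) : False := by
  rcases two_mem hu hv (by omega) with h' | h'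
  · have hp : ([u, v]).Pairwise (· < ·) := (isChain_iff_pairwise.1 hIc).sublist h'
    have : u < v := (pairwise_cons.1 hp).1 v (by simp)
    omega
  · exact nodup_order hl huv (h'.trans hI)

theorem not_both_dec {l D : List ℕ} (hl : l.Nodup) (hD : D <+ l) (hDc : D.IsChain (· > ·))
    {u v : ℕ} (huv : [u, v] <+ l) (hvu : u < v) (hu : u ∈ D) (hv : v ∈ D) : False := by
  rcases two_mem hu hv (by omega) with h' | h'
  · have hp : ([u, v]).Pairwise (· > ·) := (isChain_iff_pairwise.1 hDc).sublist h'
    have : u > v := (pairwise_cons.1 hp).1 v (by simp)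
    omega
  · exact nodup_order hl huv (h'.trans hD)

theorem count_lemma {l I D : List ℕ} (hl : l.Nodup) (hI : I <+ l) (hD : D <+ l)
    (hIc : I.IsChain (· < ·)) (hDc : D.IsChain (· > ·)) {z : ℕ} (hz : z ∈ l)
    (hzI : z ∉ I) (hzD : z ∉ D) : I.length + D.length ≤ l.length := by
  have hInd : I.Nodup := hI.nodup hl
  have hDnd : D.Nodup := hD.nodup hl
  have hinter : (I.toFinset ∩ D.toFinset).card ≤ 1 := by
    refine Finset.card_le_one.2 ?_
    intro a ha b hb
    simp only [Finset.mem_inter, List.mem_toFinset] at ha hb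
    by_contra hab
    rcases two_mem ha.1 hb.1 hab with h' | h'
    · have hab' : a < b := by
        have hp := (isChain_iff_pairwise.1 hIc).sublist h'
        exact (pairwise_cons.1 hp).1 b (by simp)
      exact not_both_dec hl hD hDc (h'.trans hI) hab' ha.2 hb.2
    · have hab' : b < a := by
        have hp := (isChain_iff_pairwise.1 hIc).sublist h'
        exact (pairwise_cons.1 hp).1 a (by simp)
      exact not_both_dec hl hD hDc (h'.trans hI) hab' hb.2 ha.2
  have hunion : (I.toFinset ∪ D.toFinset) ⊆ l.toFinset.erase z := by
    intro a ha
    rcases Finset.mem_union.1 ha with ha | ha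
    · rw [List.mem_toFinset] at ha
      exact Finset.mem_erase.2 ⟨fun h => hzI (h ▸ ha), List.mem_toFinset.2 (hI.subset ha)⟩
    · rw [List.mem_toFinset] at ha
      exact Finset.mem_erase.2 ⟨fun h => hzD (h ▸ ha), List.mem_toFinset.2 (hD.subset ha)⟩
  have hcard := Finset.card_union_add_card_inter I.toFinset D.toFinset
  have h1 : (I.toFinset ∪ D.toFinset).card ≤ l.toFinset.card - 1 := by
    calc (I.toFinset ∪ D.toFinset).card ≤ (l.toFinset.erase z).card :=
          Finset.card_le_card hunion
      _ = l.toFinset.card - 1 := Finset.card_erase_of_mem (List.mem_toFinset.2 hz)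
  have h2 : I.toFinset.card = I.length := List.toFinset_card_of_nodup hInd
  have h3 : D.toFinset.card = D.length := List.toFinset_card_of_nodup hDnd
  have h4 : l.toFinset.card = l.length := List.toFinset_card_of_nodup hl
  have h5 : 1 ≤ l.toFinset.card := Finset.card_pos.2 ⟨z, List.mem_toFinset.2 hz⟩
  omega

/-- crossing pattern 3412 : increasing pairs (v1,v2),(v3,v4), rest decreasing -/
theorem cross_contra {l I D : List ℕ} (hl : l.Nodup)
    (hI : I <+ l) (hD : D <+ l) (hIc : I.IsChain (· < ·)) (hDc : D.IsChain (· > ·))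
    (hlen : l.length + 1 ≤ I.length + D.length)
    {v1 v2 v3 v4 : ℕ}
    (s12 : [v1,v2] <+ l) (s13 : [v1,v3] <+ l) (s14 : [v1,v4] <+ l)
    (s23 : [v2,v3] <+ l) (s24 : [v2,v4] <+ l) (s34 : [v3,v4] <+ l)
    (hv34 : v3 < v4) (hv41 : v4 < v1) (hv12 : v1 < v2) : False := by
  have m1 : v1 ∈ l := s12.subset (by simp)
  have m2 : v2 ∈ l := s12.subset (by simp)
  have m3 : v3 ∈ l := s34.subset (by simp)
  have m4 : v4 ∈ l := s34.subset (by simp)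
  have key : ∃ z, z ∈ l ∧ z ∉ I ∧ z ∉ D := by
    by_cases h3I : v3 ∈ I
    · have h1I : v1 ∉ I := fun h => not_both_inc hl hI hIc s13 (by omega) h h3I
      have h2I : v2 ∉ I := fun h => not_both_inc hl hI hIc s23 (by omega) h h3I
      by_cases h1D : v1 ∈ D
      · have h2D : v2 ∉ D := fun h => not_both_dec hl hD hDc s12 hv12 h1D h
        exact ⟨v2, m2, h2I, h2D⟩
      · exact ⟨v1, m1, h1I, h1D⟩
    · by_cases h3D : v3 ∈ D
      · have h4D : v4 ∉ D := fun h => not_both_dec hl hD hDc s34 hv34 h3D h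
        by_cases h4I : v4 ∈ I
        · have h1I : v1 ∉ I := fun h => not_both_inc hl hI hIc s14 (by omega) h h4I
          have h2I : v2 ∉ I := fun h => not_both_inc hl hI hIc s24 (by omega) h h4I
          by_cases h1D : v1 ∈ D
          · have h2D : v2 ∉ D := fun h => not_both_dec hl hD hDc s12 hv12 h1D h
            exact ⟨v2, m2, h2I, h2D⟩
          · exact ⟨v1, m1, h1I, h1D⟩
        · exact ⟨v4, m4, h4I, h4D⟩
      · exact ⟨v3, m3, h3I, h3D⟩
  obtain ⟨z, hz, hzI, hzD⟩ := key
  have := count_lemma hl hI hD hIc hDc hz hzI hzD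
  omega

/-- disjoint pattern 2143 : decreasing pairs (v1,v2),(v3,v4), rest increasing -/
theorem disj_contra {l I D : List ℕ} (hl : l.Nodup)
    (hI : I <+ l) (hD : D <+ l) (hIc : I.IsChain (· < ·)) (hDc : D.IsChain (· > ·))
    (hlen : l.length + 1 ≤ I.length + D.length)
    {v1 v2 v3 v4 : ℕ}
    (s12 : [v1,v2] <+ l) (s13 : [v1,v3] <+ l) (s14 : [v1,v4] <+ l)
    (s23 : [v2,v3] <+ l) (s24 : [v2,v4] <+ l) (s34 : [v3,v4] <+ l)
    (hv21 : v2 < v1) (hv14 : v1 < v4) (hv43 : v4 < v3) : False := by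
  have m1 : v1 ∈ l := s12.subset (by simp)
  have m2 : v2 ∈ l := s12.subset (by simp)
  have m3 : v3 ∈ l := s34.subset (by simp)
  have m4 : v4 ∈ l := s34.subset (by simp)
  have key : ∃ z, z ∈ l ∧ z ∉ I ∧ z ∉ D := by
    by_cases h3D : v3 ∈ D
    · have h1D : v1 ∉ D := fun h => not_both_dec hl hD hDc s13 (by omega) h h3D
      have h2D : v2 ∉ D := fun h => not_both_dec hl hD hDc s23 (by omega) h h3D
      by_cases h1I : v1 ∈ I
      · have h2I : v2 ∉ I := fun h => not_both_inc hl hI hIc s12 hv21 h1I h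
        exact ⟨v2, m2, h2I, h2D⟩
      · exact ⟨v1, m1, h1I, h1D⟩
    · by_cases h3I : v3 ∈ I
      · have h4I : v4 ∉ I := fun h => not_both_inc hl hI hIc s34 hv43 h3I h
        by_cases h4D : v4 ∈ D
        · have h1D : v1 ∉ D := fun h => not_both_dec hl hD hDc s14 (by omega) h h4D
          have h2D : v2 ∉ D := fun h => not_both_dec hl hD hDc s24 (by omega) h h4D
          by_cases h1I : v1 ∈ I
          · have h2I : v2 ∉ I := fun h => not_both_inc hl hI hIc s12 hv21 h1I h
            exact ⟨v2, m2, h2I, h2D⟩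
          · exact ⟨v1, m1, h1I, h1D⟩
        · exact ⟨v4, m4, h4I, h4D⟩
      · exact ⟨v3, m3, h3I, h3D⟩
  obtain ⟨z, hz, hzI, hzD⟩ := key
  have := count_lemma hl hI hD hIc hDc hz hzI hzD
  omega

end RSAux

namespace RSAux
open List

variable {n : ℕ}

theorem winv {w : Equiv.Perm (Fin n)} (hinv : w * w = 1) : ∀ i, w (w i) = i := by
  intro i
  have := congrArg (fun p : Equiv.Perm (Fin n) => p i) hinv
  simpa [Equiv.Perm.mul_apply] using this

theorem nested_construct (hn : 0 < n) (w : Equiv.Perm (Fin n)) (hinv : w * w = 1)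
    (hN : Nested w) :
    ∃ I D : List ℕ, I <+ wordOf n w ∧ D <+ wordOf n w ∧ I.IsChain (· < ·) ∧
      D.IsChain (· > ·) ∧ I.length + D.length = n + 1 := by
  classical
  have hw := winv hinv
  set F : Finset (Fin n) := Finset.univ.filter (fun i => w i = i) with hF
  set A : Finset (Fin n) := Finset.univ.filter (fun i => i < w i) with hA
  set Bs : Finset (Fin n) := Finset.univ.filter (fun i => w i < i) with hBs
  have hmemF : ∀ i, i ∈ F ↔ w i = i := by intro i; simp [hF]
  have hmemA : ∀ i, i ∈ A ↔ i < w i := by intro i; simp [hA]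
  have hmemB : ∀ i, i ∈ Bs ↔ w i < i := by intro i; simp [hBs]
  have hAB : ∀ i ∈ A, w i ∈ Bs := by
    intro i hi
    rw [hmemA] at hi
    rw [hmemB, hw]
    exact hi
  have hBA : ∀ i ∈ Bs, w i ∈ A := by
    intro i hi
    rw [hmemB] at hi
    rw [hmemA, hw]
    exact hi
  have na : ∀ i ∈ A, ∀ j ∈ A, i < j → w j < w i := by
    intro i hi j hj hij
    rcases hN i j (w i) (w j) ((hmemA i).1 hi) ((hmemA j).1 hj) rfl rfl (ne_of_lt hij)
      with ⟨_, h⟩ | ⟨h, _⟩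
    · exact h
    · exact absurd hij (not_lt.2 (le_of_lt h))
  have nb : ∀ i ∈ Bs, ∀ j ∈ Bs, i < j → w j < w i := by
    intro i hi j hj hij
    have h1 : w i < w (w i) := by rw [hw]; exact (hmemB i).1 hi
    have h2 : w j < w (w j) := by rw [hw]; exact (hmemB j).1 hj
    have hne : w i ≠ w j := fun h => (ne_of_lt hij) (w.injective h)
    rcases hN (w i) (w j) (w (w i)) (w (w j)) h1 h2 rfl rfl hne with ⟨_, h⟩ | ⟨h', h⟩
    · rw [hw, hw] at h
      exact absurd hij (not_lt.2 (le_of_lt h))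
    · exact h'
  have nab : ∀ i ∈ A, ∀ j ∈ Bs, i < j := by
    intro i hi j hj
    rcases eq_or_ne i (w j) with rfl | hne
    · exact (hmemB j).1 hj
    · have h1 : i < w i := (hmemA i).1 hi
      have h2 : w j < w (w j) := by rw [hw]; exact (hmemB j).1 hj
      rcases hN i (w j) (w i) (w (w j)) h1 h2 rfl rfl hne with ⟨ha, hb⟩ | ⟨ha, hb⟩
      · rw [hw] at hb
        exact lt_trans ha ((hmemB j).1 hj)
      · rw [hw] at hb
        exact lt_trans h1 hb
  have nabv : ∀ i ∈ A, ∀ j ∈ Bs, w j < w i := by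
    intro i hi j hj
    exact nab (w j) (hBA j hj) (w i) (hAB i hi)
  -- partition cardinality
  have hdFA : Disjoint F A := by
    rw [Finset.disjoint_left]
    intro i hiF hiA
    rw [hmemF] at hiF
    rw [hmemA] at hiA
    rw [hiF] at hiA
    exact absurd hiA (lt_irrefl i)
  have hdFB : Disjoint F Bs := by
    rw [Finset.disjoint_left]
    intro i hiF hiB
    rw [hmemF] at hiF
    rw [hmemB] at hiB
    rw [hiF] at hiB
    exact absurd hiB (lt_irrefl i)
  have hdAB : Disjoint A Bs := by
    rw [Finset.disjoint_left]
    intro i hiA hiB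
    rw [hmemA] at hiA
    rw [hmemB] at hiB
    exact absurd (lt_trans hiA hiB) (lt_irrefl i)
  have hpart : F.card + A.card + Bs.card = n := by
    have hu : F ∪ A ∪ Bs = Finset.univ := by
      apply Finset.eq_univ_of_forall
      intro i
      simp only [Finset.mem_union, hmemF i, hmemA i, hmemB i]
      rcases lt_trichotomy i (w i) with h | h | h
      · exact Or.inl (Or.inr h)
      · exact Or.inl (Or.inl h.symm)
      · exact Or.inr h
    have h1 : (F ∪ A).card = F.card + A.card := Finset.card_union_of_disjoint hdFA
    have h2 : (F ∪ A ∪ Bs).card = (F ∪ A).card + Bs.card := by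
      refine Finset.card_union_of_disjoint ?_
      rw [Finset.disjoint_union_left]
      exact ⟨hdFB, hdAB⟩
    rw [hu] at h2
    simp only [Finset.card_univ, Fintype.card_fin] at h2
    omega
  rcases Finset.eq_empty_or_nonempty A with hAe | hAne
  · -- no 2-cycles : identity-like
    have hBe : Bs = ∅ := by
      rw [Finset.eq_empty_iff_forall_notMem]
      intro j hj
      have := hBA j hj
      rw [hAe] at this
      simp at this
    obtain ⟨I, hI1, hI2, hI3⟩ := finsetSeq w Finset.univ (· < ·) (by
      intro i _ j _ hij
      have hiF : w i = i := by
        have := hpart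
        rcases lt_trichotomy i (w i) with h | h | h
        · exact absurd ((hmemA i).2 h) (by rw [hAe]; simp)
        · exact h.symm
        · exact absurd ((hmemB i).2 h) (by rw [hBe]; simp)
      have hjF : w j = j := by
        rcases lt_trichotomy j (w j) with h | h | h
        · exact absurd ((hmemA j).2 h) (by rw [hAe]; simp)
        · exact h.symm
        · exact absurd ((hmemB j).2 h) (by rw [hBe]; simp)
      rw [hiF, hjF]
      have : (i : ℕ) < (j : ℕ) := hij
      omega)
    refine ⟨I, [(w ⟨0, hn⟩ : ℕ) + 1], hI1, ?_, hI2.isChain, by simp, ?_⟩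
    · exact singleton_sublist.2 (mem_wordOf w _)
    · simp only [length_singleton, hI3, Finset.card_univ, Fintype.card_fin]
  · -- there are 2-cycles
    set aM : Fin n := A.max' hAne with haM
    have haMA : aM ∈ A := A.max'_mem hAne
    have haMlt : aM < w aM := (hmemA aM).1 haMA
    have hbmB : w aM ∈ Bs := hAB aM haMA
    have hbm_min : ∀ j ∈ Bs, w aM ≤ j := by
      intro j hj
      have hwjA : w j ∈ A := hBA j hj
      have hle : w j ≤ aM := A.le_max' _ hwjA
      rcases eq_or_lt_of_le hle with he | hlt
      · have : w (w j) = w aM := by rw [he]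
        rw [hw] at this
        exact le_of_eq this.symm
      · have := na (w j) hwjA aM haMA hlt
        rw [hw] at this
        exact le_of_lt this
    by_cases hp : ∃ p : Fin n, w p = p ∧ aM < p ∧ p < w aM
    · -- a fixed point inside the innermost arc : put it in D
      obtain ⟨p, hpf, hp1, hp2⟩ := hp
      have hpnotAB : p ∉ A ∪ Bs := by
        intro hmem
        rcases Finset.mem_union.1 hmem with h | h
        · rw [hmemA] at h; rw [hpf] at h; exact absurd h (lt_irrefl _)
        · rw [hmemB] at h; rw [hpf] at h; exact absurd h (lt_irrefl _)
      obtain ⟨D, hD1, hD2, hD3⟩ := finsetSeq w (insert p (A ∪ Bs)) (· > ·) (by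
        intro i hi j hj hij
        have key : w j < w i := by
          rcases Finset.mem_insert.1 hi with hip | hi
          · rcases Finset.mem_insert.1 hj with hjp | hj
            · rw [hip, hjp] at hij
              exact absurd hij (lt_irrefl _)
            · rcases Finset.mem_union.1 hj with hj | hj
              · -- j ∈ A but i = p > aM ≥ j contradiction
                rw [hip] at hij
                exact absurd (lt_of_lt_of_le hij (A.le_max' _ hj)) (not_lt.2 (le_of_lt hp1))
              · -- j ∈ Bs : w j ∈ A ≤ aM < p = w i
                rw [hip, hpf]
                exact lt_of_le_of_lt (A.le_max' _ (hBA j hj)) hp1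
          · rcases Finset.mem_insert.1 hj with hjp | hj
            · rcases Finset.mem_union.1 hi with hi | hi
              · -- i ∈ A : w j = p < w aM ≤ w i (w i ∈ Bs)
                rw [hjp, hpf]
                exact lt_of_lt_of_le hp2 (hbm_min _ (hAB i hi))
              · -- i ∈ Bs : i ≥ w aM > p = j contradiction with i < j
                rw [hjp] at hij
                exact absurd (lt_of_le_of_lt (hbm_min i hi) hij) (not_lt.2 (le_of_lt hp2))
            · rcases Finset.mem_union.1 hi with hi | hi
              · rcases Finset.mem_union.1 hj with hj | hj
                · exact na i hi j hj hij
                · exact nabv i hi j hj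
              · rcases Finset.mem_union.1 hj with hj | hj
                · exact absurd (nab j hj i hi) (not_lt.2 (le_of_lt hij))
                · exact nb i hi j hj hij
        have : (w j : ℕ) < (w i : ℕ) := key
        omega)
      obtain ⟨I, hI1, hI2, hI3⟩ := finsetSeq w F (· < ·) (by
        intro i hi j hj hij
        rw [hmemF] at hi hj
        rw [hi, hj]
        have : (i : ℕ) < (j : ℕ) := hij
        omega)
      refine ⟨I, D, hI1, hD1, hI2.isChain, hD2.isChain, ?_⟩
      rw [hI3, hD3]
      rw [Finset.card_insert_of_notMem hpnotAB, Finset.card_union_of_disjoint hdAB]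
      omega
    · -- no fixed point inside the innermost arc : adjoin aM to I
      push_neg at hp
      have haMnF : aM ∉ F := by
        rw [hmemF]
        exact fun h => absurd (h ▸ haMlt) (lt_irrefl _)
      obtain ⟨I, hI1, hI2, hI3⟩ := finsetSeq w (insert aM F) (· < ·) (by
        intro i hi j hj hij
        have key : (w i : Fin n) < w j := by
          rcases Finset.mem_insert.1 hi with hia | hi
          · rcases Finset.mem_insert.1 hj with hja | hj
            · rw [hia, hja] at hij
              exact absurd hij (lt_irrefl _)
            · -- i = aM, j fixed, j > aM : j not in (aM, w aM) so j > w aM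
              rw [hmemF] at hj
              rw [hia, hj]
              rw [hia] at hij
              rcases lt_trichotomy j (w aM) with h | h | h
              · exact absurd h (not_lt.2 (hp j hj hij))
              · exfalso
                have he : w j = w aM := by rw [hj, h]
                have he2 : j = aM := w.injective he
                rw [he2] at hij
                exact absurd hij (lt_irrefl _)
              · exact h
          · rcases Finset.mem_insert.1 hj with hja | hj
            · -- i fixed, j = aM : w i = i < aM < w aM
              rw [hmemF] at hi
              rw [hja] at hij
              rw [hja, hi]
              exact lt_trans hij haMlt
            · rw [hmemF] at hi hj
              rw [hi, hj]
              exact hij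
        have : (w i : ℕ) < (w j : ℕ) := key
        omega)
      obtain ⟨D, hD1, hD2, hD3⟩ := finsetSeq w (A ∪ Bs) (· > ·) (by
        intro i hi j hj hij
        have key : w j < w i := by
          rcases Finset.mem_union.1 hi with hi | hi
          · rcases Finset.mem_union.1 hj with hj | hj
            · exact na i hi j hj hij
            · exact nabv i hi j hj
          · rcases Finset.mem_union.1 hj with hj | hj
            · exact absurd (nab j hj i hi) (not_lt.2 (le_of_lt hij))
            · exact nb i hi j hj hij
        have : (w j : ℕ) < (w i : ℕ) := key
        omega)
      refine ⟨I, D, hI1, hD1, hI2.isChain, hD2.isChain, ?_⟩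
      rw [hI3, hD3]
      rw [Finset.card_insert_of_notMem haMnF, Finset.card_union_of_disjoint hdAB]
      omega

end RSAux

namespace RSAux
open List

variable {n : ℕ}

theorem core_contra (w : Equiv.Perm (Fin n)) (hinv : w * w = 1) {I D : List ℕ}
    (hI : I <+ wordOf n w) (hD : D <+ wordOf n w)
    (hIc : I.IsChain (· < ·)) (hDc : D.IsChain (· > ·))
    (hsum : (wordOf n w).length + 1 ≤ I.length + D.length)
    {a b c d : Fin n} (hab : a < b) (hac : a < c) (hbd : b < d) (hcd : c < d)
    (hwa : w a = c) (hwb : w b = d) : False := by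
  have hw := winv hinv
  have hwc : w c = a := by rw [← hwa, hw]
  have hwd : w d = b := by rw [← hwb, hw]
  have hl : (wordOf n w).Nodup := wordOf_nodup w
  rcases lt_trichotomy b c with hbc | hbc | hcb
  · -- crossing : positions a < b < c < d
    refine cross_contra hl hI hD hIc hDc hsum
      (pair_sublist_wordOf w hab) (pair_sublist_wordOf w hac)
      (pair_sublist_wordOf w (lt_trans hab hbd)) (pair_sublist_wordOf w hbc)
      (pair_sublist_wordOf w hbd) (pair_sublist_wordOf w hcd) ?_ ?_ ?_
    · rw [hwc, hwd]
      have : (a : ℕ) < (b : ℕ) := hab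
      omega
    · rw [hwd, hwa]
      have : (b : ℕ) < (c : ℕ) := hbc
      omega
    · rw [hwa, hwb]
      have : (c : ℕ) < (d : ℕ) := hcd
      omega
  · -- b = c : forces d = a, contradiction
    have hda : d = a := by rw [← hwb, hbc, hwc]
    rw [hda] at hbd
    exact absurd (lt_trans hac (hbc ▸ hbd)) (lt_irrefl a)
  · -- disjoint : positions a < c < b < d
    refine disj_contra hl hI hD hIc hDc hsum
      (pair_sublist_wordOf w hac) (pair_sublist_wordOf w hab)
      (pair_sublist_wordOf w (lt_trans hab hbd)) (pair_sublist_wordOf w hcb)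
      (pair_sublist_wordOf w hcd) (pair_sublist_wordOf w hbd) ?_ ?_ ?_
    · rw [hwc, hwa]
      have : (a : ℕ) < (c : ℕ) := hac
      omega
    · rw [hwa, hwd]
      have : (c : ℕ) < (b : ℕ) := hcb
      omega
    · rw [hwd, hwb]
      have : (b : ℕ) < (d : ℕ) := hbd
      omega

theorem main_forward (hn : 0 < n) (w : Equiv.Perm (Fin n)) (hinv : w * w = 1)
    (hB : ((RB (wordOf n w)).2).IsChain (· > ·)) : Nested w := by
  classical
  set l := wordOf n w with hldef
  have hl : l.Nodup := wordOf_nodup w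
  have hlen : l.length = n := wordOf_length w
  have hlne : l ≠ [] := by
    intro h
    rw [h] at hlen
    simp at hlen
    omega
  obtain ⟨ic, im, ibm, icount, irne⟩ := basic l hl
  have hRne : (RB l).1 ≠ [] := irne hlne
  have hRpos : 0 < ((RB l).1).length := length_pos_iff.2 hRne
  obtain ⟨ih1, _⟩ := inv3 l hl
  obtain ⟨I, hI, hIc, hIlen, _⟩ := ih1 (((RB l).1).length - 1) (Nat.sub_lt hRpos Nat.one_pos)
  have hIlen' : I.length = ((RB l).1).length := by
    rw [hIlen, Nat.sub_add_cancel hRpos]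
  -- build D
  have hID : ∃ D : List ℕ, D <+ l ∧ D.IsChain (· > ·) ∧
      l.length + 1 ≤ I.length + D.length := by
    rcases eq_or_ne (RB l).2 [] with hBe | hBne
    · refine ⟨[l.head hlne], singleton_sublist.2 (head_mem hlne), by simp, ?_⟩
      have : ((RB l).2).length = 0 := by rw [hBe]; simp
      simp only [length_singleton]
      omega
    · obtain ⟨d, v, hdv, hch, hlenq, _, _⟩ := inv1 l hl hB hBne
      refine ⟨d ++ [v], hdv, hch, ?_⟩
      simp only [length_append, length_singleton]
      omega
  obtain ⟨D, hD, hDc, hsum⟩ := hID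
  by_contra hN
  unfold Nested at hN
  push_neg at hN
  obtain ⟨a, b, c, d, hac, hbd, hwa, hwb, hab, hno1, hno2⟩ := hN
  have hw := winv hinv
  rcases lt_or_gt_of_ne hab with h | h
  · have hcled : c ≤ d := hno1 h
    have hcd : c < d := by
      rcases eq_or_lt_of_le hcled with he | hlt
      · exfalso
        apply hab
        apply w.injective
        rw [hwa, hwb, he]
      · exact hlt
    exact core_contra w hinv hI hD hIc hDc hsum h hac hbd hcd hwa hwb
  · have hdlec : d ≤ c := hno2 h
    have hdc : d < c := by
      rcases eq_or_lt_of_le hdlec with he | hlt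
      · exfalso
        apply hab
        apply w.injective
        rw [hwa, hwb, he]
      · exact hlt
    exact core_contra w hinv hI hD hIc hDc hsum h hbd hac hdc hwb hwa

theorem main_backward (hn : 0 < n) (w : Equiv.Perm (Fin n)) (hinv : w * w = 1)
    (hN : Nested w) : ((RB (wordOf n w)).2).IsChain (· > ·) := by
  classical
  set l := wordOf n w with hldef
  have hl : l.Nodup := wordOf_nodup w
  have hlen : l.length = n := wordOf_length w
  obtain ⟨ic, im, ibm, icount, irne⟩ := basic l hl
  obtain ⟨I, D, hI, hD, hIc, hDc, hsum⟩ := nested_construct hn w hinv hN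
  obtain ⟨_, ih2⟩ := inv3 l hl
  have hIle : I.length ≤ ((RB l).1).length := (ih2 I hI hIc).1
  obtain ⟨u, hu, huc, hcase⟩ := inv2 l hl D hD hDc
  have hDne : D ≠ [] := by
    intro h
    rw [h] at hsum
    simp at hsum
    omega
  have hule : ((RB l).2).length ≤ u.length := by
    rcases hcase with hc | hc | hc
    · exact absurd hc.1 hDne
    · obtain ⟨_, _, _, hle, _⟩ := hc
      omega
    · obtain ⟨_, _, _, _, hle, _⟩ := hc
      omega
  have : u = (RB l).2 := hu.eq_of_length_le hule
  rw [← this]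
  exact huc

end RSAux


/-- An involution `w` has L-shaped RS partition (the common shape of `P(w)`
and `Q(w)`), i.e. of the form `(s,1,1,...,1)`, iff `w` is a nested involution. -/
theorem RS_partition_L_shaped_iff_nested (n : ℕ) (hn : 0 < n) (w : Equiv.Perm (Fin n))
    (hinv : w * w = 1) :
    (∃ s k : ℕ, (RSP (wordOf n w)).map List.length = s :: List.replicate k 1) ↔ Nested w := by
  have hlne : wordOf n w ≠ [] := by
    have hh := RSAux.wordOf_length w
    intro h
    rw [h] at hh
    simp at hh
    omega
  rw [RSAux.hook_iff_Bdec _ hlne]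
  constructor
  · exact RSAux.main_forward hn w hinv
  · exact RSAux.main_backward hn w hinv
end
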